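/- arXiv:1807.00508 — 8 statements merged into one kernel-verified Lean document; each statement's English description precedes it below -/
import Mathlib

section
/- For every real x ≥ 101, the sum over all prime powers p^h with h ≥ 2 and p^h ≥ x² of p^{-h} is at most 4.02·1.25506/(x·log x). -/
open scoped Classical

/-- The prime counting function: number of primes `p ≤ x`. -/
noncomputable def primePi (x : ℝ) : ℕ :=
  ((Finset.range (Nat.floor x + 1)).filter (fun p => p.Prime)).card

lemma tele (g : ℕ → ℝ) (a : ℕ) : ∀ b, a ≤ b →
    ∑ n ∈ Finset.Icc a b, (g n - g (n+1)) = g a - g (b+1) := by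
  intro b
  induction b with
  | zero => intro h; interval_cases a; simp
  | succ b ih =>
    intro h
    rcases Nat.lt_or_ge a (b+1) with h' | h'
    · rw [Finset.sum_Icc_succ_top (by omega), ih (by omega)]; ring
    · have : a = b + 1 := by omega
      subst this; simp

lemma count_le_primePi (S : Finset ℕ) (hS : ∀ p ∈ S, p.Prime) (n : ℕ) :
    ((S.filter (· ≤ n)).card : ℝ) ≤ (primePi (n:ℝ) : ℕ) := by
  have : (S.filter (· ≤ n)) ⊆ (Finset.range (Nat.floor (n:ℝ) + 1)).filter (fun p => Nat.Prime p) := by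
    intro p hp
    simp only [Finset.mem_filter, Finset.mem_range] at hp ⊢
    refine ⟨?_, hS p hp.1⟩
    rw [Nat.floor_natCast]; omega
  exact_mod_cast Finset.card_le_card this


lemma geom_bound (p : ℕ) (hp : 2 ≤ p) (m : ℕ) (F : Finset ℕ) (hF : ∀ h ∈ F, m ≤ h) :
    ∑ h ∈ F, ((p:ℝ)^h)⁻¹ ≤ ((p:ℝ)^m)⁻¹ * (1 - (p:ℝ)⁻¹)⁻¹ := by
  have hp1 : (1:ℝ) < p := by exact_mod_cast hp.trans_lt' one_lt_two
  set r : ℝ := (p:ℝ)⁻¹ with hr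
  have hr0 : 0 ≤ r := by positivity
  have hr1 : r < 1 := by
    rw [hr, inv_lt_one_iff₀]; right; exact hp1
  have key : ∀ h ∈ F, ((p:ℝ)^h)⁻¹ = r^m * r^(h-m) := by
    intro h hh
    rw [← pow_add, ← Nat.add_sub_assoc (hF h hh), Nat.add_sub_cancel_left, hr, ← inv_pow]
  rw [Finset.sum_congr rfl key, ← Finset.mul_sum]
  have h2 : ∑ h ∈ F, r^(h-m) = ∑ k ∈ F.image (· - m), r^k := by
    rw [Finset.sum_image]
    intro a ha b hb hab
    have := hF a ha; have := hF b hb; simp only at hab; omega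
  rw [h2]
  have h3 : ∑ k ∈ F.image (· - m), r^k ≤ ∑' k : ℕ, r^k :=
    Summable.sum_le_tsum _ (fun k _ => by positivity) (summable_geometric_of_lt_one hr0 hr1)
  rw [tsum_geometric_of_lt_one hr0 hr1] at h3
  have hrm : (0:ℝ) ≤ r^m := by positivity
  calc r^m * ∑ h ∈ F.image (· - m), r^h ≤ r^m * (1-r)⁻¹ :=
        mul_le_mul_of_nonneg_left h3 hrm
    _ = ((p:ℝ)^m)⁻¹ * (1 - (p:ℝ)⁻¹)⁻¹ := by rw [hr, inv_pow]

lemma abel_bound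
    (hπ : ∀ t : ℝ, 1 < t → (primePi t : ℝ) < 1.25506 * t / Real.log t)
    (x : ℝ) (hx : 101 ≤ x) (S : Finset ℕ)
    (hS : ∀ p ∈ S, p.Prime ∧ x < (p:ℝ)) :
    ∑ p ∈ S, ((p:ℝ) * ((p:ℝ) - 1))⁻¹ ≤ 1.25506 / Real.log x * (2 / (x - 1)) := by
  have hx0 : (0:ℝ) < x := by linarith
  have hL : 0 < Real.log x := Real.log_pos (by linarith)
  rcases S.eq_empty_or_nonempty with rfl | hne
  · have h1 : (0:ℝ) < x - 1 := by linarith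
    simp
    positivity
  set N : ℕ := Nat.floor x with hN
  have hN101 : 101 ≤ N := Nat.le_floor (by exact_mod_cast hx)
  have hNx : (N:ℝ) ≤ x := Nat.floor_le hx0.le
  have hxN1 : x < N + 1 := Nat.lt_floor_add_one x
  have hSN : ∀ p ∈ S, N + 1 ≤ p := by
    intro p hp
    have h1 : x < (p:ℝ) := (hS p hp).2
    have : (N:ℝ) < p := lt_of_le_of_lt hNx h1
    exact_mod_cast Nat.add_one_le_iff.mpr (by exact_mod_cast this)
  set M : ℕ := S.max' hne with hM
  have hMS : M ∈ S := S.max'_mem hne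
  have hNM : N + 1 ≤ M := hSN M hMS
  set w : ℕ → ℝ := fun n => (((n:ℝ) - 1) * n)⁻¹ with hw
  set u : ℕ → ℝ := fun n => ((n:ℝ) - 1)⁻¹ + (n:ℝ)⁻¹ with hu
  set L := Real.log x with hLdef
  -- step 1: rewrite each term via telescoping
  have step1 : ∀ p ∈ S, ((p:ℝ) * ((p:ℝ) - 1))⁻¹
      = ∑ n ∈ Finset.Icc (N+1) M, (if p ≤ n then (w n - w (n+1)) else 0) + w (M+1) := by
    intro p hp
    have hpM : p ≤ M := S.le_max' p hp
    have hpN : N + 1 ≤ p := hSN p hp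
    have hfil : (Finset.Icc (N+1) M).filter (fun n => p ≤ n) = Finset.Icc p M := by
      ext n; simp only [Finset.mem_filter, Finset.mem_Icc]; omega
    rw [← Finset.sum_filter, hfil, tele w p M hpM]
    have : w p = ((p:ℝ) * ((p:ℝ) - 1))⁻¹ := by rw [hw]; ring_nf
    rw [this]; ring
  rw [Finset.sum_congr rfl step1, Finset.sum_add_distrib, Finset.sum_const, Finset.sum_comm]
  -- now: ∑ n ∈ Icc, ∑ p ∈ S, ite ... + card S • w (M+1)
  have hprimes : ∀ p ∈ S, p.Prime := fun p hp => (hS p hp).1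
  have hpi_bound : ∀ n : ℕ, N + 1 ≤ n → ((S.filter (· ≤ n)).card : ℝ) ≤ 1.25506 * n / L := by
    intro n hn
    have h1 : (1:ℝ) < n := by
      have : 102 ≤ n := by omega
      exact_mod_cast lt_of_lt_of_le (by norm_num) this
    have h2 := hπ n h1
    have h3 : L ≤ Real.log n := by
      rw [hLdef]
      apply Real.log_le_log hx0
      have : x < (N:ℝ) + 1 := hxN1
      have hn' : (N:ℝ) + 1 ≤ n := by exact_mod_cast hn
      linarith
    have h4 : 0 < Real.log n := lt_of_lt_of_le hL h3
    calc ((S.filter (· ≤ n)).card : ℝ) ≤ primePi (n:ℝ) := count_le_primePi S hprimes n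
      _ ≤ 1.25506 * n / Real.log n := h2.le
      _ ≤ 1.25506 * n / L := by
          apply div_le_div_of_nonneg_left _ hL h3
          positivity
  -- bound inner sums
  have inner_bound : ∀ n ∈ Finset.Icc (N+1) M,
      (∑ p ∈ S, if p ≤ n then (w n - w (n+1)) else 0) ≤ 1.25506 / L * (u n - u (n+1)) := by
    intro n hn
    rw [Finset.mem_Icc] at hn
    have hn102 : (102:ℝ) ≤ n := by exact_mod_cast (by omega : 102 ≤ n)
    have hsum : (∑ p ∈ S, if p ≤ n then (w n - w (n+1)) else 0)
        = ((S.filter (· ≤ n)).card : ℝ) * (w n - w (n+1)) := by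
      rw [← Finset.sum_filter, Finset.sum_const, nsmul_eq_mul]
    rw [hsum]
    have e1 : ((n:ℝ)) - 1 ≠ 0 := by linarith
    have e2 : ((n:ℝ)) ≠ 0 := by linarith
    have e3 : ((n:ℝ)) + 1 ≠ 0 := by linarith
    have hd : w n - w (n+1) = 2 / (((n:ℝ)-1) * n * ((n:ℝ)+1)) := by
      simp only [hw]; push_cast; rw [add_sub_cancel_right]
      field_simp
      ring
    have hdn : 0 ≤ w n - w (n+1) := by
      rw [hd]
      have q1 : (0:ℝ) < (n:ℝ) - 1 := by linarith
      have q2 : (0:ℝ) < (n:ℝ) := by linarith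
      have q3 : (0:ℝ) < (n:ℝ) + 1 := by linarith
      have : (0:ℝ) < ((n:ℝ)-1) * n * ((n:ℝ)+1) := mul_pos (mul_pos q1 q2) q3
      exact div_nonneg (by norm_num) this.le
    have hud : u n - u (n+1) = (n:ℝ) * (w n - w (n+1)) := by
      rw [hd]; simp only [hu]; push_cast; rw [add_sub_cancel_right]
      field_simp
      ring
    calc ((S.filter (· ≤ n)).card : ℝ) * (w n - w (n+1))
        ≤ (1.25506 * n / L) * (w n - w (n+1)) :=
          mul_le_mul_of_nonneg_right (hpi_bound n (by omega)) hdn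
      _ = 1.25506 / L * (u n - u (n+1)) := by rw [hud]; field_simp
  have hmain := Finset.sum_le_sum inner_bound
  rw [← Finset.mul_sum, tele u (N+1) M hNM] at hmain
  -- remainder
  have hcard : (S.card : ℝ) ≤ 1.25506 * M / L := by
    have : S.filter (· ≤ M) = S := by
      apply Finset.filter_true_of_mem
      intro p hp; exact S.le_max' p hp
    have h := hpi_bound M hNM
    rwa [this] at h
  have hM102 : (102:ℝ) ≤ M := by exact_mod_cast (by omega : 102 ≤ M)
  have hwMval : w (M+1) = ((M:ℝ) * ((M:ℝ)+1))⁻¹ := by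
    simp only [hw]; push_cast; ring_nf
  have hwM : 0 ≤ w (M+1) := by
    rw [hwMval]; positivity
  have hrem : (S.card : ℝ) * w (M+1) ≤ 1.25506 / L * u (M+1) := by
    have huMval : ((M:ℝ)+1)⁻¹ ≤ u (M+1) := by
      simp only [hu]; push_cast
      have h1 : 0 < (M:ℝ) + 1 - 1 := by linarith
      have h2 : (0:ℝ) ≤ ((M:ℝ) + 1 - 1)⁻¹ := by positivity
      linarith
    calc (S.card : ℝ) * w (M+1) ≤ (1.25506 * M / L) * w (M+1) :=
          mul_le_mul_of_nonneg_right hcard hwM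
      _ = 1.25506 / L * ((M:ℝ) * w (M+1)) := by ring
      _ = 1.25506 / L * ((M:ℝ) * ((M:ℝ) * ((M:ℝ)+1))⁻¹) := by rw [hwMval]
      _ = 1.25506 / L * ((M:ℝ)+1)⁻¹ := by
          congr 1
          have h1 : (0:ℝ) < M := by linarith
          have h2 : (0:ℝ) < (M:ℝ)+1 := by linarith
          field_simp
      _ ≤ 1.25506 / L * u (M+1) := by
          apply mul_le_mul_of_nonneg_left huMval
          positivity
  have hfinal : u (N+1) ≤ 2 / (x-1) := by
    rw [hu]; push_cast
    have h1 : x - 1 ≤ (N:ℝ) + 1 - 1 := by linarith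
    have h2 : x - 1 ≤ (N:ℝ) + 1 := by linarith
    have hx1 : (0:ℝ) < x - 1 := by linarith
    have i1 : ((N:ℝ) + 1 - 1)⁻¹ ≤ (x-1)⁻¹ := by
      apply inv_anti₀ hx1 h1
    have i2 : ((N:ℝ) + 1)⁻¹ ≤ (x-1)⁻¹ := by
      apply inv_anti₀ hx1 h2
    have : 2 / (x-1) = (x-1)⁻¹ + (x-1)⁻¹ := by ring
    rw [this]
    exact add_le_add i1 i2
  have hpos : 0 ≤ (1.25506:ℝ) / L := by positivity
  have hns : S.card • w (M+1) = (S.card : ℝ) * w (M+1) := by rw [nsmul_eq_mul]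
  rw [hns]
  calc (∑ n ∈ Finset.Icc (N+1) M, ∑ p ∈ S, if p ≤ n then (w n - w (n+1)) else 0)
        + (S.card:ℝ) * w (M+1)
      ≤ 1.25506 / L * (u (N+1) - u (M+1)) + 1.25506 / L * u (M+1) := by linarith [hrem, hmain]
    _ = 1.25506 / L * u (N+1) := by ring
    _ ≤ 1.25506 / L * (2/(x-1)) := mul_le_mul_of_nonneg_left hfinal hpos

theorem stmt1
    (hπ : ∀ t : ℝ, 1 < t → (primePi t : ℝ) < 1.25506 * t / Real.log t) :
    ∀ x : ℝ, 101 ≤ x →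
      (∑' q : ℕ × ℕ, if q.1.Prime ∧ 2 ≤ q.2 ∧ x ^ 2 ≤ (q.1 : ℝ) ^ q.2
        then ((q.1 : ℝ) ^ q.2)⁻¹ else 0)
      ≤ 4.02 * 1.25506 / (x * Real.log x) := by
  intro x hx
  have hx0 : (0:ℝ) < x := by linarith
  have hx1 : (1:ℝ) < x := by linarith
  have hL : 0 < Real.log x := Real.log_pos hx1
  set L := Real.log x with hLdef
  apply tsum_le_of_sum_le' (by positivity)
  intro s
  set f : ℕ × ℕ → ℝ := fun q =>
    if q.1.Prime ∧ 2 ≤ q.2 ∧ x ^ 2 ≤ (q.1 : ℝ) ^ q.2 then ((q.1 : ℝ) ^ q.2)⁻¹ else 0 with hf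
  have hf0 : ∀ q, 0 ≤ f q := by
    intro q; rw [hf]; dsimp only; split
    · positivity
    · exact le_refl 0
  set A := s.image Prod.fst with hA
  set Bs := s.image Prod.snd with hBs
  have hsub : s ⊆ A ×ˢ Bs := by
    intro q hq
    exact Finset.mem_product.mpr ⟨Finset.mem_image_of_mem _ hq, Finset.mem_image_of_mem _ hq⟩
  have h1 : ∑ q ∈ s, f q ≤ ∑ q ∈ A ×ˢ Bs, f q :=
    Finset.sum_le_sum_of_subset_of_nonneg hsub (fun q _ _ => hf0 q)
  rw [Finset.sum_product] at h1
  -- per-prime bounds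
  have key : ∀ p ∈ A, (∑ h ∈ Bs, f (p, h)) ≤
      (if p.Prime ∧ (p:ℝ) ≤ x then 2/x^2 else 0)
      + (if p.Prime ∧ x < (p:ℝ) then ((p:ℝ) * ((p:ℝ) - 1))⁻¹ else 0) := by
    intro p _
    by_cases hp : p.Prime
    · have hp2 : 2 ≤ p := hp.two_le
      have hp2R : (2:ℝ) ≤ p := by exact_mod_cast hp2
      have hhalf : (1:ℝ)/2 ≤ 1 - (p:ℝ)⁻¹ := by
        have : (p:ℝ)⁻¹ ≤ (2:ℝ)⁻¹ := inv_anti₀ (by norm_num) hp2R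
        rw [show ((2:ℝ))⁻¹ = 1/2 by norm_num] at this
        linarith
      have hinvpos : (0:ℝ) ≤ (1 - (p:ℝ)⁻¹)⁻¹ := by
        have : (0:ℝ) < 1 - (p:ℝ)⁻¹ := by linarith
        positivity
      have hinv2 : (1 - (p:ℝ)⁻¹)⁻¹ ≤ 2 := by
        calc (1 - (p:ℝ)⁻¹)⁻¹ ≤ ((1:ℝ)/2)⁻¹ := inv_anti₀ (by norm_num) hhalf
          _ = 2 := by norm_num
      have hgeneric : ∀ m : ℕ, (∀ h : ℕ, (2 ≤ h ∧ x ^ 2 ≤ (p:ℝ) ^ h) → m ≤ h) →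
          (∑ h ∈ Bs, f (p, h)) ≤ ((p:ℝ)^m)⁻¹ * (1 - (p:ℝ)⁻¹)⁻¹ := by
        intro m hm
        set F := Bs.filter (fun h => 2 ≤ h ∧ x ^ 2 ≤ (p:ℝ) ^ h) with hF
        have e1 : ∑ h ∈ Bs, f (p, h) = ∑ h ∈ F, f (p, h) := by
          symm
          apply Finset.sum_filter_of_ne
          intro h _ hne
          rw [hf] at hne; dsimp only at hne
          by_contra hcon
          exact hne (if_neg (fun hc => hcon ⟨hc.2.1, hc.2.2⟩))
        have e2 : ∑ h ∈ F, f (p, h) = ∑ h ∈ F, ((p:ℝ)^h)⁻¹ := by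
          apply Finset.sum_congr rfl
          intro h hh
          rw [Finset.mem_filter] at hh
          rw [hf]; dsimp only
          exact if_pos ⟨hp, hh.2.1, hh.2.2⟩
        rw [e1, e2]
        apply geom_bound p hp2 m
        intro h hh
        rw [Finset.mem_filter] at hh
        exact hm h hh.2
      rcases le_or_gt (p:ℝ) x with hcase | hcase
      · -- small prime
        have hex : ∃ h : ℕ, x ^ 2 ≤ (p:ℝ) ^ h := by
          obtain ⟨n, hn⟩ := pow_unbounded_of_one_lt (x^2) (by exact_mod_cast hp.one_lt : (1:ℝ) < p)
          exact ⟨n, hn.le⟩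
        set m := Nat.find hex with hm
        have hmle : ∀ h : ℕ, (2 ≤ h ∧ x ^ 2 ≤ (p:ℝ) ^ h) → m ≤ h :=
          fun h hh => Nat.find_min' hex hh.2
        have hspec : x ^ 2 ≤ (p:ℝ) ^ m := Nat.find_spec hex
        have hb := hgeneric m hmle
        have hbb : ((p:ℝ)^m)⁻¹ * (1 - (p:ℝ)⁻¹)⁻¹ ≤ (x^2)⁻¹ * 2 := by
          apply mul_le_mul
          · exact inv_anti₀ (by positivity) hspec
          · exact hinv2
          · exact hinvpos
          · positivity
        rw [if_pos ⟨hp, hcase⟩, if_neg (fun hc => absurd hcase (not_le.mpr hc.2))]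
        calc ∑ h ∈ Bs, f (p, h) ≤ (x^2)⁻¹ * 2 := le_trans hb hbb
          _ = 2/x^2 + 0 := by ring
      · -- large prime
        have hb := hgeneric 2 (fun h hh => hh.1)
        have heq : ((p:ℝ)^2)⁻¹ * (1 - (p:ℝ)⁻¹)⁻¹ = ((p:ℝ) * ((p:ℝ) - 1))⁻¹ := by
          have q1 : (p:ℝ) ≠ 0 := by linarith
          have q2 : (p:ℝ) - 1 ≠ 0 := by linarith
          field_simp
        rw [if_neg (fun hc => absurd hcase (not_lt.mpr hc.2)), if_pos ⟨hp, hcase⟩]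
        rw [heq] at hb
        linarith [hb]
    · -- not prime
      rw [if_neg (fun hc => hp hc.1), if_neg (fun hc => hp hc.1)]
      have : ∀ h ∈ Bs, f (p, h) = 0 := by
        intro h _
        rw [hf]; dsimp only
        exact if_neg (fun hc => hp hc.1)
      rw [Finset.sum_congr rfl this]
      simp
  have h2 := Finset.sum_le_sum key
  rw [Finset.sum_add_distrib] at h2
  -- small primes total
  have hsmall : ∑ p ∈ A, (if p.Prime ∧ (p:ℝ) ≤ x then 2/x^2 else 0)
      ≤ 2 * 1.25506 / (x * L) := by
    rw [← Finset.sum_filter, Finset.sum_const, nsmul_eq_mul]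
    have hcard : ((A.filter (fun p : ℕ => p.Prime ∧ (p:ℝ) ≤ x)).card : ℝ) ≤ (primePi x : ℕ) := by
      have hsub2 : A.filter (fun p : ℕ => p.Prime ∧ (p:ℝ) ≤ x)
          ⊆ (Finset.range (Nat.floor x + 1)).filter (fun p => Nat.Prime p) := by
        intro p hp
        rw [Finset.mem_filter] at hp ⊢
        refine ⟨Finset.mem_range.mpr ?_, hp.2.1⟩
        have : p ≤ Nat.floor x := Nat.le_floor hp.2.2
        omega
      exact_mod_cast Finset.card_le_card hsub2
    have hπx : (primePi x : ℝ) ≤ 1.25506 * x / L := (hπ x hx1).le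
    calc ((A.filter (fun p : ℕ => p.Prime ∧ (p:ℝ) ≤ x)).card : ℝ) * (2/x^2)
        ≤ (1.25506 * x / L) * (2/x^2) := by
          apply mul_le_mul_of_nonneg_right (le_trans hcard hπx) (by positivity)
      _ = 2 * 1.25506 / (x * L) := by field_simp
  -- large primes total
  have hlarge : ∑ p ∈ A, (if p.Prime ∧ x < (p:ℝ) then ((p:ℝ) * ((p:ℝ) - 1))⁻¹ else 0)
      ≤ 1.25506 / L * (2/(x-1)) := by
    rw [← Finset.sum_filter]
    apply abel_bound hπ x hx
    intro p hp
    rw [Finset.mem_filter] at hp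
    exact hp.2
  have hstep : 1.25506 / L * (2/(x-1)) ≤ 2.02 * 1.25506 / (x * L) := by
    have hxx : (0:ℝ) < x - 1 := by linarith
    have ha : 2/(x-1) ≤ 2.02/x := by
      rw [div_le_div_iff₀ hxx hx0]; linarith
    calc 1.25506 / L * (2/(x-1)) ≤ 1.25506 / L * (2.02/x) :=
          mul_le_mul_of_nonneg_left ha (by positivity)
      _ = 2.02 * 1.25506 / (x * L) := by field_simp
  calc ∑ q ∈ s, f q ≤ _ := h1
    _ ≤ _ := h2
    _ ≤ 2 * 1.25506 / (x * L) + 1.25506 / L * (2/(x-1)) := add_le_add hsmall hlarge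
    _ ≤ 2 * 1.25506 / (x * L) + 2.02 * 1.25506 / (x * L) := by linarith [hstep]
    _ = 4.02 * 1.25506 / (x * L) := by ring
end

section
/- For every real x > x₀ ≥ e (in particular x ≥ 101), one has ∑_{p > x} p^{-2} ≤ 2·1.25506/(x·log x), where the sum is over primes p > x. -/
open scoped Classical

open Filter Finset

lemma hasSum_tele (f : ℕ → ℝ) (p : ℕ)
    (hmono : ∀ n, p ≤ n → f (n + 1) ≤ f n)
    (h0 : Tendsto f atTop (nhds 0)) :
    HasSum (fun n => if p ≤ n then f n - f (n + 1) else 0) (f p) := by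
  have hnn : ∀ n, 0 ≤ (if p ≤ n then f n - f (n + 1) else 0) := by
    intro n
    by_cases h : p ≤ n
    · simp [h, sub_nonneg.2 (hmono n h)]
    · simp [h]
  rw [hasSum_iff_tendsto_nat_of_nonneg hnn]
  have key : ∀ K, p ≤ K →
      ∑ n ∈ range K, (if p ≤ n then f n - f (n + 1) else 0) = f p - f K := by
    intro K hK
    have h1 : (range K).filter (fun n => p ≤ n) = Finset.Ico p K := by
      ext n; simp only [Finset.mem_filter, Finset.mem_range, Finset.mem_Ico]; exact and_comm
    rw [← Finset.sum_filter, h1, Finset.sum_Ico_eq_sum_range]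
    have h2 := Finset.sum_range_sub' (fun i => f (p + i)) (K - p)
    simp only [← add_assoc] at h2
    rw [h2, Nat.add_zero, Nat.add_sub_cancel' hK]
  have : Tendsto (fun K => f p - f K) atTop (nhds (f p)) := by
    simpa using tendsto_const_nhds.sub h0
  refine this.congr' ?_
  filter_upwards [eventually_ge_atTop p] with K hK
  exact (key K hK).symm

lemma hs_sq (p : ℕ) (hp : 1 ≤ p) :
    HasSum (fun n => if p ≤ n then ((n : ℝ) ^ 2)⁻¹ - (((n : ℝ) + 1) ^ 2)⁻¹ else 0)
      (((p : ℝ) ^ 2)⁻¹) := by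
  have h := hasSum_tele (fun n => ((n : ℝ) ^ 2)⁻¹) p
    (fun n hn => by
      have hn1 : (1 : ℝ) ≤ (n : ℝ) := by exact_mod_cast le_trans hp hn
      refine inv_anti₀ (by nlinarith) ?_
      push_cast; nlinarith)
    (by
      apply Tendsto.inv_tendsto_atTop
      exact (tendsto_pow_atTop two_ne_zero).comp tendsto_natCast_atTop_atTop)
  have he : (fun n : ℕ => if p ≤ n then ((n : ℝ) ^ 2)⁻¹ - (((n + 1 : ℕ) : ℝ) ^ 2)⁻¹ else 0)
      = (fun n : ℕ => if p ≤ n then ((n : ℝ) ^ 2)⁻¹ - (((n : ℝ) + 1) ^ 2)⁻¹ else 0) := by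
    funext n; push_cast; rfl
  rwa [he] at h

lemma hs_lin (p : ℕ) (hp : 1 ≤ p) :
    HasSum (fun n => if p ≤ n then ((n : ℝ))⁻¹ - ((n : ℝ) + 1)⁻¹ else 0) ((p : ℝ))⁻¹ := by
  have h := hasSum_tele (fun n => ((n : ℝ))⁻¹) p
    (fun n hn => by
      have hn1 : (1 : ℝ) ≤ (n : ℝ) := by exact_mod_cast le_trans hp hn
      refine inv_anti₀ (by linarith) ?_
      push_cast; linarith)
    (by
      apply Tendsto.inv_tendsto_atTop
      exact tendsto_natCast_atTop_atTop)
  have he : (fun n : ℕ => if p ≤ n then ((n : ℝ))⁻¹ - (((n + 1 : ℕ) : ℝ))⁻¹ else 0)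
      = (fun n : ℕ => if p ≤ n then ((n : ℝ))⁻¹ - ((n : ℝ) + 1)⁻¹ else 0) := by
    funext n; push_cast; rfl
  rwa [he] at h

theorem stmt2
    (hπ : ∀ t : ℝ, 1 < t → (primePi t : ℝ) < 1.25506 * t / Real.log t) :
    ∀ x : ℝ, 101 ≤ x →
      (∑' p : ℕ, if p.Prime ∧ x < (p : ℝ) then ((p : ℝ) ^ 2)⁻¹ else 0)
      ≤ 2 * 1.25506 / (x * Real.log x) := by
  intro x hx
  have hx0 : (0 : ℝ) < x := by linarith
  have hx1 : (1 : ℝ) < x := by linarith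
  have hL2 : 0 < Real.log x := Real.log_pos hx1
  set N : ℕ := Nat.floor x + 1 with hNdef
  have hxN : x < (N : ℝ) := by
    push_cast [hNdef]; exact Nat.lt_floor_add_one x
  have hN101 : 101 ≤ N := by
    have : (100 : ℕ) ≤ Nat.floor x := Nat.le_floor (by push_cast; linarith)
    omega
  have hiff : ∀ p : ℕ, (x < (p : ℝ)) ↔ N ≤ p := by
    intro p
    rw [hNdef, Nat.add_one_le_iff, Nat.floor_lt hx0.le]
  set c : ℝ := 2 * 1.25506 / Real.log x with hc
  have hc0 : 0 ≤ c := by positivity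
  -- the RHS telescoping sum
  have hR : HasSum (fun n => c * if N ≤ n then ((n : ℝ))⁻¹ - ((n : ℝ) + 1)⁻¹ else 0)
      (c * ((N : ℝ))⁻¹) := (hs_lin N (by omega)).mul_left c
  apply Real.tsum_le_of_sum_range_le
  · intro p; positivity
  intro K
  rw [← Finset.sum_filter]
  set T := (range K).filter (fun p : ℕ => p.Prime ∧ x < (p : ℝ)) with hT
  have hTN : ∀ p ∈ T, N ≤ p := by
    intro p hp
    rw [hT, Finset.mem_filter] at hp
    exact (hiff p).1 hp.2.2
  have hTp : ∀ p ∈ T, p.Prime := by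
    intro p hp
    rw [hT, Finset.mem_filter] at hp
    exact hp.2.1
  -- rewrite each p⁻² as a telescoping tsum
  have step1 : ∑ p ∈ T, ((p : ℝ) ^ 2)⁻¹
      = ∑ p ∈ T, ∑' n : ℕ, (if p ≤ n then ((n : ℝ) ^ 2)⁻¹ - (((n : ℝ) + 1) ^ 2)⁻¹ else 0) := by
    refine Finset.sum_congr rfl fun p hp => ?_
    exact ((hs_sq p (by have := hTN p hp; omega)).tsum_eq).symm
  have step2 : ∑ p ∈ T, ∑' n : ℕ, (if p ≤ n then ((n : ℝ) ^ 2)⁻¹ - (((n : ℝ) + 1) ^ 2)⁻¹ else 0)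
      = ∑' n, ∑ p ∈ T, (if p ≤ n then ((n : ℝ) ^ 2)⁻¹ - (((n : ℝ) + 1) ^ 2)⁻¹ else 0) := by
    exact (Summable.tsum_finsetSum fun p hp => (hs_sq p (by have := hTN p hp; omega)).summable).symm
  -- termwise bound
  have term : ∀ n : ℕ,
      (∑ p ∈ T, (if p ≤ n then ((n : ℝ) ^ 2)⁻¹ - (((n : ℝ) + 1) ^ 2)⁻¹ else 0))
      ≤ c * if N ≤ n then ((n : ℝ))⁻¹ - ((n : ℝ) + 1)⁻¹ else 0 := by
    intro n
    by_cases hn : N ≤ n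
    · have hn101 : (101 : ℝ) ≤ (n : ℝ) := by exact_mod_cast le_trans hN101 hn
      have hn0 : (0 : ℝ) < (n : ℝ) := by linarith
      have hdd : 0 ≤ ((n : ℝ) ^ 2)⁻¹ - (((n : ℝ) + 1) ^ 2)⁻¹ := by
        rw [sub_nonneg]
        exact inv_anti₀ (by nlinarith) (by nlinarith)
      rw [← Finset.sum_filter, Finset.sum_const, nsmul_eq_mul, if_pos hn]
      -- count ≤ primePi n
      have hcard : ((T.filter (fun p => p ≤ n)).card : ℝ) ≤ (primePi (n : ℝ) : ℝ) := by
        have hsub : T.filter (fun p => p ≤ n) ⊆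
            (Finset.range (Nat.floor ((n : ℝ)) + 1)).filter (fun p => p.Prime) := by
          intro p hp
          rw [Finset.mem_filter] at hp ⊢
          refine ⟨?_, hTp p hp.1⟩
          rw [Finset.mem_range, Nat.floor_natCast]
          omega
        exact_mod_cast Finset.card_le_card hsub
      have hNn : ((N : ℕ) : ℝ) ≤ (n : ℝ) := by exact_mod_cast hn
      have hπn := hπ (n : ℝ) (by linarith)
      have hL1 : Real.log x ≤ Real.log (n : ℝ) := Real.log_le_log hx0 (by linarith)
      have hL1pos : 0 < Real.log (n : ℝ) := lt_of_lt_of_le hL2 hL1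
      calc ((T.filter (fun p => p ≤ n)).card : ℝ) * (((n : ℝ) ^ 2)⁻¹ - (((n : ℝ) + 1) ^ 2)⁻¹)
          ≤ (1.25506 * (n : ℝ) / Real.log (n : ℝ)) * (((n : ℝ) ^ 2)⁻¹ - (((n : ℝ) + 1) ^ 2)⁻¹) := by
            exact mul_le_mul_of_nonneg_right (le_trans hcard hπn.le) hdd
        _ ≤ c * (((n : ℝ))⁻¹ - ((n : ℝ) + 1)⁻¹) := by
            set nn := (n : ℝ)
            have e1 : (nn ^ 2)⁻¹ - ((nn + 1) ^ 2)⁻¹ = (2 * nn + 1) / (nn ^ 2 * (nn + 1) ^ 2) := by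
              field_simp; ring
            have e2 : nn⁻¹ - (nn + 1)⁻¹ = 1 / (nn * (nn + 1)) := by
              field_simp; ring
            rw [e1, e2, hc, div_mul_div_comm, div_mul_div_comm,
              div_le_div_iff₀ (by positivity) (by positivity)]
            have key : Real.log x * (2 * nn + 1) ≤ Real.log nn * (2 * nn + 2) := by
              apply mul_le_mul hL1 (by linarith) (by linarith) hL1pos.le
            nlinarith [mul_le_mul_of_nonneg_left key
              (show (0 : ℝ) ≤ 1.25506 * nn ^ 2 * (nn + 1) by positivity)]
    · rw [if_neg hn, mul_zero]
      apply le_of_eq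
      apply Finset.sum_eq_zero
      intro p hp
      rw [if_neg]
      have := hTN p hp
      omega
  have sumle : ∑' n : ℕ, (∑ p ∈ T, (if p ≤ n then ((n : ℝ) ^ 2)⁻¹ - (((n : ℝ) + 1) ^ 2)⁻¹ else 0))
      ≤ c * ((N : ℝ))⁻¹ := by
    rw [← hR.tsum_eq]
    refine Summable.tsum_le_tsum term ?_ hR.summable
    exact (hasSum_sum fun p hp => hs_sq p (by have := hTN p hp; omega)).summable
  calc ∑ p ∈ T, ((p : ℝ) ^ 2)⁻¹ ≤ c * ((N : ℝ))⁻¹ := by rw [step1, step2]; exact sumle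
    _ ≤ c * x⁻¹ := by gcongr
    _ = 2 * 1.25506 / (x * Real.log x) := by rw [hc]; field_simp
end

section
/- Let y > x > 1 and let k₀(s) = ((y^{s-1} − x^{s-1})/(s−1))². For x ≥ 2 and k₁(s) = k₀(s; x, x²), the inverse Mellin transform of k₁, namely (1/(2πi))∫_{a−i∞}^{a+i∞} k₁(s) u^{−s} ds for a > −1/2, equals u^{−1} log(x⁴/u) if x³ ≤ u ≤ x⁴, equals u^{−1} log(u/x²) if x² ≤ u ≤ x³, and equals 0 otherwise. -/
open Complex

open MeasureTheory Real FourierTransform in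
private lemma aux_hasDerivAt1 (c : ℂ) (hc : c ≠ 0) (b : ℝ) (v : ℝ) :
    HasDerivAt (fun v : ℝ => Complex.exp (c * v) * (((v : ℂ) - b) / c - 1 / c ^ 2))
      (Complex.exp (c * v) * ((v : ℂ) - b)) v := by
  have h1 : HasDerivAt (fun v : ℝ => (v : ℂ)) 1 v := by
    simpa using (hasDerivAt_id v).ofReal_comp
  have hexp : HasDerivAt (fun v : ℝ => Complex.exp (c * v)) (Complex.exp (c * v) * c) v := by
    simpa [mul_comm] using ((h1.const_mul c).cexp)
  have hlin : HasDerivAt (fun v : ℝ => ((v : ℂ) - b) / c - 1 / c ^ 2) (1 / c) v := by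
    exact (((h1.sub_const (b : ℂ)).div_const c).sub_const (1 / c ^ 2))
  have : HasDerivAt (fun v : ℝ => Complex.exp (c * v) * (((v : ℂ) - b) / c - 1 / c ^ 2)) _ v := hexp.mul hlin
  convert this using 1
  field_simp
  ring

open MeasureTheory Real FourierTransform in
private lemma aux_int1 (c : ℂ) (hc : c ≠ 0) (p q : ℝ) :
    ∫ v in p..q, Complex.exp (c * v) * ((v : ℂ) - p)
      = Complex.exp (c * q) * (((q : ℂ) - p) / c - 1 / c ^ 2)
        - Complex.exp (c * p) * (((p : ℂ) - p) / c - 1 / c ^ 2) := by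
  refine intervalIntegral.integral_eq_sub_of_hasDerivAt
    (fun v _ => aux_hasDerivAt1 c hc p v) ?_
  apply Continuous.intervalIntegrable
  fun_prop

open MeasureTheory Real FourierTransform in
private lemma aux_int2 (c : ℂ) (hc : c ≠ 0) (p q : ℝ) :
    ∫ v in p..q, Complex.exp (c * v) * ((q : ℂ) - v)
      = -(Complex.exp (c * q) * (((q : ℂ) - q) / c - 1 / c ^ 2))
        + Complex.exp (c * p) * (((p : ℂ) - q) / c - 1 / c ^ 2) := by
  have := aux_int1
  have h : ∫ v in p..q, Complex.exp (c * v) * ((q : ℂ) - v)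
      = ∫ v in p..q, -(Complex.exp (c * v) * ((v : ℂ) - q)) := by
    apply intervalIntegral.integral_congr
    intro v _
    ring
  rw [h, intervalIntegral.integral_neg]
  rw [intervalIntegral.integral_eq_sub_of_hasDerivAt
    (fun v _ => aux_hasDerivAt1 c hc q v)
    (by apply Continuous.intervalIntegrable; fun_prop)]
  ring

noncomputable def gfun (L aa : ℝ) : ℝ → ℂ :=
  fun v => ((max 0 (min (v - 2 * L) (4 * L - v)) : ℝ) : ℂ)
    * Complex.exp (((aa : ℂ) - 1) * v)

open MeasureTheory Real FourierTransform

lemma gfun_continuous (L aa : ℝ) : Continuous (gfun L aa) := by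
  unfold gfun
  fun_prop

lemma gfun_zero_outside (L aa : ℝ) {v : ℝ} (hv : v ∉ Set.Icc (2 * L) (4 * L)) :
    gfun L aa v = 0 := by
  simp only [Set.mem_Icc, not_and_or, not_le] at hv
  unfold gfun
  rcases hv with h | h
  · have : min (v - 2 * L) (4 * L - v) ≤ v - 2 * L := min_le_left _ _
    have h0 : max 0 (min (v - 2 * L) (4 * L - v)) = 0 := by
      rw [max_eq_left]; linarith
    rw [h0]; simp
  · have : min (v - 2 * L) (4 * L - v) ≤ 4 * L - v := min_le_right _ _
    have h0 : max 0 (min (v - 2 * L) (4 * L - v)) = 0 := by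
      rw [max_eq_left]; linarith
    rw [h0]; simp

lemma gfun_integrable (L aa : ℝ) : Integrable (gfun L aa) := by
  apply Continuous.integrable_of_hasCompactSupport (gfun_continuous L aa)
  apply HasCompactSupport.intro (isCompact_Icc (a := 2 * L) (b := 4 * L))
  exact fun v hv => gfun_zero_outside L aa hv

set_option maxHeartbeats 1000000 in
lemma gfun_fourier (L aa : ℝ) (hL : 0 < L) (ξ : ℝ)
    (hc : ((aa : ℂ) - 1) - 2 * Real.pi * ξ * Complex.I ≠ 0) :
    𝓕 (gfun L aa) ξ
      = ((Complex.exp (2 * L * (((aa : ℂ) - 1) - 2 * Real.pi * ξ * Complex.I))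
          - Complex.exp (L * (((aa : ℂ) - 1) - 2 * Real.pi * ξ * Complex.I)))
        / (((aa : ℂ) - 1) - 2 * Real.pi * ξ * Complex.I)) ^ 2 := by
  set c : ℂ := ((aa : ℂ) - 1) - 2 * Real.pi * ξ * Complex.I with hcdef
  clear_value c
  rw [Real.fourier_real_eq_integral_exp_smul]
  have hint : ∀ v : ℝ, Complex.exp (↑(-2 * Real.pi * v * ξ) * Complex.I) • gfun L aa v
      = ((max 0 (min (v - 2 * L) (4 * L - v)) : ℝ) : ℂ) * Complex.exp (c * v) := by
    intro v
    unfold gfun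
    rw [smul_eq_mul, ← mul_assoc, mul_comm (Complex.exp _) (((max 0 _ : ℝ) : ℂ)), mul_assoc,
      ← Complex.exp_add]
    congr 2
    rw [hcdef]
    push_cast
    ring
  simp_rw [hint]
  have hsupp : ∀ v : ℝ, v ∉ Set.Icc (2 * L) (4 * L) →
      ((max 0 (min (v - 2 * L) (4 * L - v)) : ℝ) : ℂ) * Complex.exp (c * v) = 0 := by
    intro v hv
    simp only [Set.mem_Icc, not_and_or, not_le] at hv
    rcases hv with h | h
    · have : min (v - 2 * L) (4 * L - v) ≤ v - 2 * L := min_le_left _ _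
      have h0 : max 0 (min (v - 2 * L) (4 * L - v)) = 0 := by rw [max_eq_left]; linarith
      rw [h0]; simp
    · have : min (v - 2 * L) (4 * L - v) ≤ 4 * L - v := min_le_right _ _
      have h0 : max 0 (min (v - 2 * L) (4 * L - v)) = 0 := by rw [max_eq_left]; linarith
      rw [h0]; simp
  rw [← MeasureTheory.setIntegral_eq_integral_of_forall_compl_eq_zero hsupp,
    MeasureTheory.integral_Icc_eq_integral_Ioc,
    ← intervalIntegral.integral_of_le (by linarith : 2 * L ≤ 4 * L)]
  have hsplit : ∫ v in (2*L)..(4*L), ((max 0 (min (v - 2 * L) (4 * L - v)) : ℝ) : ℂ)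
        * Complex.exp (c * v)
      = (∫ v in (2*L)..(3*L), Complex.exp (c * v) * ((v : ℂ) - (2*L : ℝ)))
        + ∫ v in (3*L)..(4*L), Complex.exp (c * v) * (((4*L : ℝ) : ℂ) - v) := by
    rw [← intervalIntegral.integral_add_adjacent_intervals
      (b := 3*L) (by apply Continuous.intervalIntegrable; fun_prop)
      (by apply Continuous.intervalIntegrable; fun_prop)]
    congr 1
    · apply intervalIntegral.integral_congr
      intro v hv
      rw [Set.uIcc_of_le (by linarith)] at hv
      obtain ⟨h1, h2⟩ := hv
      dsimp only
      have hmin : min (v - 2 * L) (4 * L - v) = v - 2 * L := min_eq_left (by linarith)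
      have hmax : max 0 (v - 2 * L) = v - 2 * L := max_eq_right (by linarith)
      rw [hmin, hmax]
      push_cast
      ring
    · apply intervalIntegral.integral_congr
      intro v hv
      rw [Set.uIcc_of_le (by linarith)] at hv
      obtain ⟨h1, h2⟩ := hv
      dsimp only
      have hmin : min (v - 2 * L) (4 * L - v) = 4 * L - v := min_eq_right (by linarith)
      have hmax : max 0 (4 * L - v) = 4 * L - v := max_eq_right (by linarith)
      rw [hmin, hmax]
      push_cast
      ring
  rw [hsplit, aux_int1 c hc, aux_int2 c hc]
  have e2 : Complex.exp (c * (2*L : ℝ)) = Complex.exp (L * c) ^ 2 := by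
    rw [← Complex.exp_nat_mul]; congr 1; push_cast; ring
  have e3 : Complex.exp (c * (3*L : ℝ)) = Complex.exp (L * c) ^ 3 := by
    rw [← Complex.exp_nat_mul]; congr 1; push_cast; ring
  have e4 : Complex.exp (c * (4*L : ℝ)) = Complex.exp (L * c) ^ 4 := by
    rw [← Complex.exp_nat_mul]; congr 1; push_cast; ring
  have e2' : Complex.exp (2 * L * c) = Complex.exp (L * c) ^ 2 := by
    rw [← Complex.exp_nat_mul]; congr 1; push_cast; ring
  rw [e2, e3, e4, e2']
  generalize Complex.exp ((L : ℂ) * c) = E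
  push_cast
  field_simp
  have h10 : c ^ 10 * c⁻¹ ^ 10 = 1 := by
    rw [← mul_pow, mul_inv_cancel₀ hc, one_pow]
  ring

lemma gfun_re_im (aa ξ : ℝ) :
    (((aa : ℂ) - 1) - 2 * Real.pi * ξ * Complex.I).re = aa - 1
    ∧ (((aa : ℂ) - 1) - 2 * Real.pi * ξ * Complex.I).im = -(2 * Real.pi * ξ) := by
  constructor <;> simp

lemma gfun_c_ne_zero (aa : ℝ) {ξ : ℝ} (hξ : ξ ≠ 0) :
    ((aa : ℂ) - 1) - 2 * Real.pi * ξ * Complex.I ≠ 0 := by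
  intro h
  have him := (gfun_re_im aa ξ).2
  rw [h] at him
  simp only [Complex.zero_im] at him
  have h2 : (2 : ℝ) * Real.pi * ξ = 0 := by linarith
  rcases mul_eq_zero.1 h2 with h' | h'
  · rcases mul_eq_zero.1 h' with h'' | h''
    · norm_num at h''
    · exact Real.pi_ne_zero h''
  · exact hξ h'

lemma gfun_fourier_integrable (L aa : ℝ) (hL : 0 < L) :
    Integrable (𝓕 (gfun L aa)) := by
  have hcont : Continuous (𝓕 (gfun L aa)) := by
    apply VectorFourier.fourierIntegral_continuous Real.continuous_fourierChar
      (by exact continuous_inner) (gfun_integrable L aa)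
  set B := ∫ v, ‖gfun L aa v‖ with hBdef
  set C := (Real.exp (2 * L * (aa - 1)) + Real.exp (L * (aa - 1))) ^ 2 with hCdef
  have hC0 : 0 ≤ C := sq_nonneg _
  have hB : ∀ ξ : ℝ, ‖𝓕 (gfun L aa) ξ‖ ≤ B := fun ξ =>
    VectorFourier.norm_fourierIntegral_le_integral_norm _ _ _ _ _
  have hC : ∀ ξ : ℝ, ‖𝓕 (gfun L aa) ξ‖ * ξ ^ 2 ≤ C := by
    intro ξ
    rcases eq_or_ne ξ 0 with h0 | h0
    · simp [h0, hC0]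
    set c : ℂ := ((aa : ℂ) - 1) - 2 * Real.pi * ξ * Complex.I with hcdef
    have hc : c ≠ 0 := gfun_c_ne_zero aa h0
    rw [gfun_fourier L aa hL ξ hc]
    have hnorm : ‖((Complex.exp (2 * L * c) - Complex.exp (L * c)) / c) ^ 2‖
        = ‖Complex.exp (2 * L * c) - Complex.exp (L * c)‖ ^ 2 / ‖c‖ ^ 2 := by
      rw [norm_pow, norm_div, div_pow]
    rw [hnorm]
    have hre2 : (2 * (L : ℂ) * c).re = 2 * L * (aa - 1) := by
      rw [hcdef]; simp
    have hre1 : ((L : ℂ) * c).re = L * (aa - 1) := by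
      rw [hcdef]; simp
    have hnum : ‖Complex.exp (2 * L * c) - Complex.exp (L * c)‖
        ≤ Real.exp (2 * L * (aa - 1)) + Real.exp (L * (aa - 1)) := by
      refine (norm_sub_le _ _).trans ?_
      rw [Complex.norm_exp, Complex.norm_exp,
        hre2, hre1]
    have hden : ξ ^ 2 ≤ ‖c‖ ^ 2 := by
      have him : |c.im| ≤ ‖c‖ := Complex.abs_im_le_norm c
      have himv : c.im = -(2 * Real.pi * ξ) := by rw [hcdef]; exact (gfun_re_im aa ξ).2
      have hpi : (1 : ℝ) ≤ 2 * Real.pi := by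
        have := Real.pi_gt_three; linarith
      have h1 : |ξ| ≤ |c.im| := by
        rw [himv, abs_neg, abs_mul]
        nlinarith [abs_nonneg ξ, _root_.abs_of_nonneg (by positivity : (0:ℝ) ≤ 2 * Real.pi)]
      have h2 : |ξ| ≤ ‖c‖ := by
        exact h1.trans him
      calc ξ ^ 2 = |ξ| ^ 2 := (_root_.sq_abs ξ).symm
        _ ≤ ‖c‖ ^ 2 := by nlinarith [abs_nonneg ξ, norm_nonneg c]
    have hcpos : 0 < ‖c‖ ^ 2 := pow_pos (norm_pos_iff.mpr hc) 2
    rw [div_mul_eq_mul_div, div_le_iff₀ hcpos]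
    have hnn : (0:ℝ) ≤ ‖Complex.exp (2 * L * c) - Complex.exp (L * c)‖ := norm_nonneg _
    calc ‖Complex.exp (2 * L * c) - Complex.exp (L * c)‖ ^ 2 * ξ ^ 2
        ≤ (Real.exp (2 * L * (aa - 1)) + Real.exp (L * (aa - 1))) ^ 2 * ‖c‖ ^ 2 := by
          apply mul_le_mul (by nlinarith) hden (sq_nonneg ξ) hC0
        _ = C * ‖c‖ ^ 2 := by rw [hCdef]
  have hbound : ∀ ξ : ℝ, ‖𝓕 (gfun L aa) ξ‖ ≤ (B + C) * (1 + ξ ^ 2)⁻¹ := by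
    intro ξ
    have hpos : (0 : ℝ) < 1 + ξ ^ 2 := by positivity
    have hstep : ‖𝓕 (gfun L aa) ξ‖ * (1 + ξ ^ 2) ≤ B + C := by
      calc ‖𝓕 (gfun L aa) ξ‖ * (1 + ξ ^ 2)
          = ‖𝓕 (gfun L aa) ξ‖ + ‖𝓕 (gfun L aa) ξ‖ * ξ ^ 2 := by ring
        _ ≤ B + C := add_le_add (hB ξ) (hC ξ)
    calc ‖𝓕 (gfun L aa) ξ‖ = ‖𝓕 (gfun L aa) ξ‖ * (1 + ξ ^ 2) * (1 + ξ ^ 2)⁻¹ := by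
          field_simp
      _ ≤ (B + C) * (1 + ξ ^ 2)⁻¹ := by
          apply mul_le_mul_of_nonneg_right hstep (by positivity)
  apply MeasureTheory.Integrable.mono' ((integrable_inv_one_add_sq).const_mul (B + C))
    hcont.aestronglyMeasurable
  exact MeasureTheory.ae_of_all _ hbound

set_option maxHeartbeats 1000000 in
theorem stmt3 (x u a : ℝ) (hx : 2 ≤ x) (hu : 0 < u) (ha : -1/2 < a) :
    (1 / (2 * (Real.pi : ℂ))) * ∫ t : ℝ,
      (((x : ℂ) ^ ((2 : ℂ) * (((a : ℂ) + t * Complex.I) - 1))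
        - (x : ℂ) ^ (((a : ℂ) + t * Complex.I) - 1)) /
          (((a : ℂ) + t * Complex.I) - 1)) ^ 2
        * (u : ℂ) ^ (-((a : ℂ) + t * Complex.I))
    = if x ^ 3 ≤ u ∧ u ≤ x ^ 4 then ((u⁻¹ * Real.log (x ^ 4 / u) : ℝ) : ℂ)
      else if x ^ 2 ≤ u ∧ u ≤ x ^ 3 then ((u⁻¹ * Real.log (u / x ^ 2) : ℝ) : ℂ)
      else 0 := by
  have hx0 : (0:ℝ) < x := by linarith
  have hL : 0 < Real.log x := Real.log_pos (by linarith)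
  set L := Real.log x with hLdef
  set w := Real.log u with hwdef
  have hxne : (x : ℂ) ≠ 0 := by exact_mod_cast hx0.ne'
  have hune : (u : ℂ) ≠ 0 := by exact_mod_cast hu.ne'
  set Ψ : ℝ → ℂ := fun t =>
      (((x : ℂ) ^ ((2 : ℂ) * (((a : ℂ) + t * Complex.I) - 1))
        - (x : ℂ) ^ (((a : ℂ) + t * Complex.I) - 1)) /
          (((a : ℂ) + t * Complex.I) - 1)) ^ 2
        * (u : ℂ) ^ (-((a : ℂ) + t * Complex.I)) with hΨdef
  -- Step 1: change of variables t = -2π ξ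
  have h2 : (1 / (2 * (Real.pi : ℂ))) * ∫ t, Ψ t = ∫ ξ : ℝ, Ψ (-(2 * Real.pi) * ξ) := by
    rw [MeasureTheory.Measure.integral_comp_mul_left Ψ (-(2 * Real.pi))]
    rw [abs_inv, abs_neg, abs_of_pos (by positivity : (0:ℝ) < 2 * Real.pi)]
    rw [Complex.real_smul]
    push_cast
    rw [one_div]
  -- Step 2: pointwise identity off ξ = 0
  have key : ∀ ξ : ℝ, ξ ≠ 0 → Ψ (-(2 * Real.pi) * ξ)
      = (u : ℂ) ^ (-(a : ℂ)) *
        (Complex.exp (↑(-2 * Real.pi * ξ * (-w)) * Complex.I) • 𝓕 (gfun L a) ξ) := by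
    intro ξ hξ
    have hc : ((a : ℂ) - 1) - 2 * Real.pi * ξ * Complex.I ≠ 0 := gfun_c_ne_zero a hξ
    set c : ℂ := ((a : ℂ) - 1) - 2 * Real.pi * ξ * Complex.I with hcdef
    rw [hΨdef]
    simp only []
    rw [gfun_fourier L a hL ξ hc, smul_eq_mul]
    have hs : ((a : ℂ) + ↑(-(2 * Real.pi) * ξ) * Complex.I) - 1 = c := by
      rw [hcdef]; push_cast; ring
    rw [hs]
    have hx2c : (x : ℂ) ^ ((2 : ℂ) * c) = Complex.exp (2 * (L:ℂ) * c) := by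
      rw [Complex.cpow_def_of_ne_zero hxne, ← Complex.ofReal_log hx0.le, ← hLdef]
      congr 1; ring
    have hxc : (x : ℂ) ^ c = Complex.exp ((L:ℂ) * c) := by
      rw [Complex.cpow_def_of_ne_zero hxne, ← Complex.ofReal_log hx0.le, ← hLdef]
    have hucomb : (u : ℂ) ^ (-((a : ℂ) + ↑(-(2 * Real.pi) * ξ) * Complex.I))
        = (u : ℂ) ^ (-(a : ℂ)) * Complex.exp (↑(-2 * Real.pi * ξ * (-w)) * Complex.I) := by
      rw [Complex.cpow_def_of_ne_zero hune, Complex.cpow_def_of_ne_zero hune,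
        ← Complex.exp_add, ← Complex.ofReal_log hu.le, ← hwdef]
      congr 1; push_cast [hcdef]; ring
    rw [hx2c, hxc, hucomb]
    ring
  -- Step 3: rewrite the integral using the Fourier inversion formula
  have h0 : ∀ᵐ (ξ : ℝ), ξ ≠ 0 := by
    have : MeasureTheory.volume ({0} : Set ℝ) = 0 := MeasureTheory.measure_singleton 0
    rw [MeasureTheory.ae_iff]
    simpa using this
  have hae : ∫ ξ : ℝ, Ψ (-(2 * Real.pi) * ξ)
      = ∫ ξ : ℝ, (u : ℂ) ^ (-(a : ℂ)) *
          (Complex.exp (↑(-2 * Real.pi * ξ * (-w)) * Complex.I) • 𝓕 (gfun L a) ξ) := by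
    apply MeasureTheory.integral_congr_ae
    filter_upwards [h0] with ξ hξ using key ξ hξ
  have hinv : ∫ ξ : ℝ, Complex.exp (↑(-2 * Real.pi * ξ * (-w)) * Complex.I) • 𝓕 (gfun L a) ξ
      = gfun L a w := by
    have h := (gfun_continuous L a).fourierInv_fourier_eq (gfun_integrable L a)
      (gfun_fourier_integrable L a hL)
    calc ∫ ξ : ℝ, Complex.exp (↑(-2 * Real.pi * ξ * (-w)) * Complex.I) • 𝓕 (gfun L a) ξ
        = 𝓕 (𝓕 (gfun L a)) (-w) :=
          (Real.fourier_real_eq_integral_exp_smul (𝓕 (gfun L a)) (-w)).symm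
      _ = 𝓕⁻ (𝓕 (gfun L a)) w := (Real.fourierInv_eq_fourier_neg _ _).symm
      _ = gfun L a w := by rw [h]
  rw [h2, hae, MeasureTheory.integral_const_mul, hinv]
  -- Step 4: evaluate
  have hupow : (u : ℂ) ^ (-(a : ℂ)) = Complex.exp ((Complex.log u) * (-(a:ℂ))) :=
    Complex.cpow_def_of_ne_zero hune _
  have hexpw : Real.exp (-w) = u⁻¹ := by
    rw [Real.exp_neg, hwdef, Real.exp_log hu]
  have hfinal : ∀ M : ℝ, (u : ℂ) ^ (-(a : ℂ)) * ((M : ℂ) * Complex.exp (((a:ℂ) - 1) * w))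
      = ((M * u⁻¹ : ℝ) : ℂ) := by
    intro M
    rw [hupow, ← Complex.ofReal_log hu.le, ← hwdef]
    have : Complex.exp ((w : ℂ) * (-(a:ℂ))) * Complex.exp (((a:ℂ) - 1) * w)
        = Complex.exp (-(w:ℂ)) := by
      rw [← Complex.exp_add]; congr 1; ring
    calc Complex.exp ((w:ℂ) * (-(a:ℂ))) * ((M : ℂ) * Complex.exp (((a:ℂ) - 1) * w))
        = (M : ℂ) * (Complex.exp ((w:ℂ) * (-(a:ℂ))) * Complex.exp (((a:ℂ) - 1) * w)) := by ring
      _ = (M : ℂ) * Complex.exp (-(w:ℂ)) := by rw [this]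
      _ = (M : ℂ) * ((Real.exp (-w) : ℝ) : ℂ) := by
          norm_cast
      _ = ((M * u⁻¹ : ℝ) : ℂ) := by rw [hexpw]; push_cast; ring
  simp only [gfun]
  rw [hfinal]
  -- now compare cases
  have hlog2 : Real.log (x ^ 2) = 2 * L := by rw [Real.log_pow]; push_cast; ring
  have hlog3 : Real.log (x ^ 3) = 3 * L := by rw [Real.log_pow]; push_cast; ring
  have hlog4 : Real.log (x ^ 4) = 4 * L := by rw [Real.log_pow]; push_cast; ring
  have hcmp : ∀ n : ℕ, (x ^ n ≤ u ↔ (n : ℝ) * L ≤ w) ∧ (u ≤ x ^ n ↔ w ≤ (n : ℝ) * L) := by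
    intro n
    have hxn : (0:ℝ) < x ^ n := by positivity
    constructor
    · rw [← Real.log_le_log_iff hxn hu, Real.log_pow, hwdef]
    · rw [← Real.log_le_log_iff hu hxn, Real.log_pow, hwdef]
  by_cases h1 : x ^ 3 ≤ u ∧ u ≤ x ^ 4
  · rw [if_pos h1]
    have hw3 : 3 * L ≤ w := by have := ((hcmp 3).1).1 h1.1; push_cast at this ⊢; linarith
    have hw4 : w ≤ 4 * L := by have := ((hcmp 4).2).1 h1.2; push_cast at this ⊢; linarith
    have hmin : min (w - 2 * L) (4 * L - w) = 4 * L - w := min_eq_right (by linarith)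
    have hmax : max 0 (4 * L - w) = 4 * L - w := max_eq_right (by linarith)
    rw [hmin, hmax]
    have : Real.log (x ^ 4 / u) = 4 * L - w := by
      rw [Real.log_div (by positivity) hu.ne', hlog4, hwdef]
    rw [this]
    push_cast
    ring
  · rw [if_neg h1]
    by_cases h2c : x ^ 2 ≤ u ∧ u ≤ x ^ 3
    · rw [if_pos h2c]
      have hw2 : 2 * L ≤ w := by have := ((hcmp 2).1).1 h2c.1; push_cast at this ⊢; linarith
      have hw3 : w ≤ 3 * L := by have := ((hcmp 3).2).1 h2c.2; push_cast at this ⊢; linarith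
      have hmin : min (w - 2 * L) (4 * L - w) = w - 2 * L := min_eq_left (by linarith)
      have hmax : max 0 (w - 2 * L) = w - 2 * L := max_eq_right (by linarith)
      rw [hmin, hmax]
      have : Real.log (u / x ^ 2) = w - 2 * L := by
        rw [Real.log_div hu.ne' (by positivity), hlog2, hwdef]
      rw [this]
      push_cast
      ring
    · rw [if_neg h2c]
      have hM : max 0 (min (w - 2 * L) (4 * L - w)) = 0 := by
        rcases lt_or_ge w (2 * L) with hw | hw2
        · exact max_eq_left (by have := min_le_left (w - 2 * L) (4 * L - w); linarith)
        · rcases lt_or_ge (4 * L) w with hw' | hw4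
          · exact max_eq_left (by have := min_le_right (w - 2 * L) (4 * L - w); linarith)
          · exfalso
            rcases le_or_gt w (3 * L) with h3 | h3
            · exact h2c ⟨((hcmp 2).1).2 (by push_cast; linarith),
                ((hcmp 3).2).2 (by push_cast; linarith)⟩
            · exact h1 ⟨((hcmp 3).1).2 (by push_cast; linarith),
                ((hcmp 4).2).2 (by push_cast; linarith)⟩
      rw [hM]
      simp
end

section
/- For x ≥ 2 and u > 0, the inverse Mellin transform (1/(2πi))∫_{a−i∞}^{a+i∞} x^{s²+s} u^{−s} ds (for a > −1/2) equals (4π log x)^{−1/2} exp(−(log(u/x))²/(4 log x)). -/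
open Complex

theorem stmt4 (x u a : ℝ) (hx : 2 ≤ x) (hu : 0 < u) (ha : -1/2 < a) :
    (1 / (2 * (Real.pi : ℂ))) * ∫ t : ℝ,
      (x : ℂ) ^ ((((a : ℂ) + t * Complex.I)) ^ 2 + ((a : ℂ) + t * Complex.I))
        * (u : ℂ) ^ (-((a : ℂ) + t * Complex.I))
    = (((4 * Real.pi * Real.log x) ^ (-(1/2) : ℝ)
        * Real.exp (-(Real.log (u / x)) ^ 2 / (4 * Real.log x)) : ℝ) : ℂ) := by
  have hx0 : (0:ℝ) < x := by linarith
  set L : ℝ := Real.log x with hLdef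
  set lu : ℝ := Real.log u with hludef
  have hL : 0 < L := Real.log_pos (by linarith)
  have hxC : (x : ℂ) ≠ 0 := by exact_mod_cast hx0.ne'
  have huC : (u : ℂ) ≠ 0 := by exact_mod_cast hu.ne'
  have hlogx : Complex.log (x : ℂ) = (L : ℂ) := by
    rw [hLdef, Complex.ofReal_log hx0.le]
  have hlogu : Complex.log (u : ℂ) = (lu : ℂ) := by
    rw [hludef, Complex.ofReal_log hu.le]
  have hb : ((-(L:ℂ))).re < 0 := by
    simpa using hL
  -- rewrite the integrand as a Gaussian
  have hint : (∫ t : ℝ,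
      (x : ℂ) ^ ((((a : ℂ) + t * Complex.I)) ^ 2 + ((a : ℂ) + t * Complex.I))
        * (u : ℂ) ^ (-((a : ℂ) + t * Complex.I)))
      = ∫ t : ℝ, Complex.exp ((-(L:ℂ)) * (t:ℂ) ^ 2
          + (Complex.I * (2*a*L + (L - lu))) * (t:ℂ)
          + ((L*a^2 + a*(L - lu) : ℝ) : ℂ)) := by
    congr 1
    funext t
    rw [Complex.cpow_def_of_ne_zero hxC, Complex.cpow_def_of_ne_zero huC,
      hlogx, hlogu, ← Complex.exp_add]
    congr 1
    push_cast
    have : Complex.I ^ 2 = -1 := Complex.I_sq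
    ring_nf
    rw [this]
    ring
  rw [hint, integral_cexp_quadratic hb]
  -- simplify the power factor
  have hpow : ((Real.pi : ℂ) / -(-(L:ℂ))) ^ (1/2 : ℂ)
      = (((Real.pi / L) ^ ((1:ℝ)/2) : ℝ) : ℂ) := by
    rw [neg_neg, Complex.ofReal_cpow (by positivity : (0:ℝ) ≤ Real.pi / L)]
    push_cast
    ring_nf
  -- simplify the exponent
  have hexp : (((L*a^2 + a*(L - lu) : ℝ) : ℂ)
      - (Complex.I * (2*a*L + (L - lu))) ^ 2 / (4 * (-(L:ℂ))))
      = ((-(L - lu)^2 / (4*L) : ℝ) : ℂ) := by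
    have hLC : (L : ℂ) ≠ 0 := by exact_mod_cast hL.ne'
    have : Complex.I ^ 2 = -1 := Complex.I_sq
    field_simp
    push_cast
    ring_nf
    rw [this]
    field_simp
    ring
  rw [hpow, hexp, ← Complex.ofReal_exp]
  have hlux : Real.log (u / x) = lu - L := Real.log_div hu.ne' hx0.ne'
  have hsq : -(L - lu)^2 / (4*L) = -(Real.log (u / x))^2 / (4*L) := by
    rw [hlux]; ring
  rw [hsq]
  -- now a purely real identity
  have hkey : 1 / (2 * Real.pi) * (Real.pi / L) ^ ((1:ℝ)/2)
      = (4 * Real.pi * L) ^ (-(1/2) : ℝ) := by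
    have hpi := Real.pi_pos
    have h1 : (Real.pi / L) ^ ((1:ℝ)/2) * (4 * Real.pi * L) ^ ((1:ℝ)/2)
        = 2 * Real.pi := by
      rw [← Real.mul_rpow (by positivity) (by positivity)]
      have : Real.pi / L * (4 * Real.pi * L) = (2 * Real.pi) ^ 2 := by
        field_simp
        ring
      rw [this, ← Real.sqrt_eq_rpow, Real.sqrt_sq (by positivity)]
    have h2 : (4 * Real.pi * L) ^ (-(1/2) : ℝ)
        = ((4 * Real.pi * L) ^ ((1:ℝ)/2))⁻¹ := by
      rw [← Real.rpow_neg (by positivity)]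
    rw [h2]
    have h3 : (4 * Real.pi * L) ^ ((1:ℝ)/2) ≠ 0 := by positivity
    field_simp
    have h1' := h1
    rw [show (4 * Real.pi * L) = Real.pi * L * 4 by ring] at h1'
    linarith [h1']
  rw [show (1 / (2 * (Real.pi : ℂ))) = (((1 / (2 * Real.pi) : ℝ)) : ℂ) by push_cast; ring]
  push_cast [← hkey]
  ring
end

section
/- For every complex number s with Re(s) > 1/2, Re(Γ'/Γ(s)) ≥ log|s| − 4/3 ≥ log(|s|+2) − (4/3 + log 5). -/
open Filter Topology Set

local notation "γ" => Real.eulerMascheroniConstant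

lemma aux_inv_sq : Summable (fun n : ℕ => 1/((n:ℝ)+1)^2) := by
  have h := (Real.summable_one_div_nat_pow (p := 2)).mpr one_lt_two
  have := (summable_nat_add_iff 1).mpr h
  refine this.congr fun n => ?_
  push_cast
  ring

lemma aux_bound {x : ℝ} (hx : 0 < x) (n : ℕ) : min 1 x * ((n:ℝ)+1) ≤ (n:ℝ)+x := by
  have h1 : min 1 x ≤ 1 := min_le_left _ _
  have h2 : min 1 x ≤ x := min_le_right _ _
  have h3 : (0:ℝ) ≤ (n:ℝ) := Nat.cast_nonneg n
  nlinarith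

lemma aux_summable_real {x : ℝ} (hx : 0 < x) :
    Summable (fun n : ℕ => 1/((n:ℝ)+1) - 1/((n:ℝ)+x)) := by
  have hm : 0 < min 1 x := lt_min one_pos hx
  refine Summable.of_norm_bounded
    (g := fun n => (|x-1|/min 1 x) * (1/((n:ℝ)+1)^2)) (aux_inv_sq.mul_left _) fun n => ?_
  have hn1 : (0:ℝ) < (n:ℝ)+1 := by positivity
  have hnx : (0:ℝ) < (n:ℝ)+x := by positivity
  have heq : 1/((n:ℝ)+1) - 1/((n:ℝ)+x) = (x-1)/(((n:ℝ)+1)*((n:ℝ)+x)) := by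
    field_simp
    ring
  rw [heq, Real.norm_eq_abs, abs_div, abs_of_pos (by positivity : (0:ℝ) < ((n:ℝ)+1)*((n:ℝ)+x))]
  have h2 : (|x-1|/min 1 x) * (1/((n:ℝ)+1)^2) = |x-1| / (min 1 x * ((n:ℝ)+1)^2) := by
    field_simp
  show _ ≤ |x-1| / (1 ⊓ x) * (1 / ((n:ℝ)+1)^2)
  rw [h2]
  apply div_le_div_of_nonneg_left (abs_nonneg _) (by positivity)
  nlinarith [aux_bound hx n]

lemma aux_ne_zero {w : ℂ} (hw : 0 < w.re) (n : ℕ) : ((n:ℂ)+w) ≠ 0 := by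
  intro h
  have : ((n:ℂ)+w).re = 0 := by rw [h]; simp
  simp only [Complex.add_re, Complex.natCast_re] at this
  have : (0:ℝ) ≤ (n:ℝ) := Nat.cast_nonneg n
  linarith

lemma aux_norm_bound {w : ℂ} {δ R : ℝ} (hδ : 0 < δ) (hδw : δ ≤ w.re) (hR : ‖w‖ ≤ R)
    (n : ℕ) :
    ‖1/((n:ℂ)+1) - 1/((n:ℂ)+w)‖ ≤ ((R+1)/min 1 δ) * (1/((n:ℝ)+1)^2) := by
  have hm : 0 < min 1 δ := lt_min one_pos hδ
  have hwre : 0 < w.re := lt_of_lt_of_le hδ hδw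
  have hn1 : ((n:ℂ)+1) ≠ 0 := by
    have := aux_ne_zero (w := 1) (by simp) n
    simpa using this
  have hnw : ((n:ℂ)+w) ≠ 0 := aux_ne_zero hwre n
  have heq : 1/((n:ℂ)+1) - 1/((n:ℂ)+w) = (w-1)/(((n:ℂ)+1)*((n:ℂ)+w)) := by
    field_simp
    ring
  have habs1 : ‖(n:ℂ)+1‖ = (n:ℝ)+1 := by
    have : ((n:ℂ)+1) = (((n:ℝ)+1 : ℝ) : ℂ) := by push_cast; ring
    rw [this, Complex.norm_real, Real.norm_eq_abs, abs_of_pos (by positivity)]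
  have habsw : min 1 δ * ((n:ℝ)+1) ≤ ‖(n:ℂ)+w‖ := by
    refine le_trans ?_ (Complex.re_le_norm _)
    simp only [Complex.add_re, Complex.natCast_re]
    calc min 1 δ * ((n:ℝ)+1) ≤ min 1 w.re * ((n:ℝ)+1) := by
          apply mul_le_mul_of_nonneg_right _ (by positivity)
          exact min_le_min le_rfl hδw
      _ ≤ (n:ℝ) + w.re := aux_bound hwre n
  have habsnum : ‖w-1‖ ≤ R + 1 := by
    calc ‖w-1‖ ≤ ‖w‖ + ‖(1:ℂ)‖ := by
          simpa [sub_eq_add_neg] using norm_add_le w (-1)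
      _ ≤ R + 1 := by simp [hR]
  rw [heq, norm_div, norm_mul, habs1]
  have h2 : ((R+1)/min 1 δ) * (1/((n:ℝ)+1)^2) = (R+1) / (min 1 δ * ((n:ℝ)+1)^2) := by
    field_simp
  rw [h2]
  have hR0 : (0:ℝ) ≤ R := le_trans (norm_nonneg w) hR
  apply div_le_div₀ (by positivity) habsnum (by positivity)
  calc min 1 δ * ((n:ℝ)+1)^2 = ((n:ℝ)+1) * (min 1 δ * ((n:ℝ)+1)) := by ring
    _ ≤ ((n:ℝ)+1) * ‖(n:ℂ)+w‖ := by
        apply mul_le_mul_of_nonneg_left habsw (by positivity)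

lemma aux_summable_complex {s : ℂ} (hs : 0 < s.re) :
    Summable (fun n : ℕ => 1/((n:ℂ)+1) - 1/((n:ℂ)+s)) := by
  refine Summable.of_norm_bounded
    (g := fun n => ((‖s‖+1)/min 1 s.re) * (1/((n:ℝ)+1)^2)) (aux_inv_sq.mul_left _)
    fun n => aux_norm_bound hs le_rfl le_rfl n

lemma aux_g_analytic :
    AnalyticOnNhd ℂ (fun s : ℂ => ∑' n : ℕ, (1/((n:ℂ)+1) - 1/((n:ℂ)+s))) {z : ℂ | 0 < z.re} := by
  apply DifferentiableOn.analyticOnNhd _ (isOpen_lt continuous_const Complex.continuous_re)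
  intro z hz
  apply DifferentiableAt.differentiableWithinAt
  have hz' : 0 < z.re := hz
  set U : Set ℂ := {w : ℂ | z.re/2 < w.re ∧ ‖w‖ < ‖z‖ + 1} with hU
  have hUopen : IsOpen U :=
    (isOpen_lt continuous_const Complex.continuous_re).inter
      (isOpen_lt continuous_norm continuous_const)
  have hzU : z ∈ U := ⟨by linarith, by linarith⟩
  have : DifferentiableOn ℂ (fun s : ℂ => ∑' n : ℕ, (1/((n:ℂ)+1) - 1/((n:ℂ)+s))) U := by
    apply Complex.differentiableOn_tsum_of_summable_norm
      (F := fun (n : ℕ) (w : ℂ) => 1/((n:ℂ)+1) - 1/((n:ℂ)+w))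
      (u := fun n : ℕ => ((‖z‖ + 1 + 1)/min 1 (z.re/2)) * (1/((n:ℝ)+1)^2))
      (aux_inv_sq.mul_left _) ?_ hUopen ?_
    case _ =>
      intro n
      intro w hw
      apply DifferentiableAt.differentiableWithinAt
      apply DifferentiableAt.sub (differentiableAt_const _)
      exact DifferentiableAt.div (differentiableAt_const 1)
        ((differentiableAt_const _).add differentiableAt_id)
        (aux_ne_zero (lt_trans (by positivity) hw.1) n)
    case _ =>
      intro n w hw
      exact aux_norm_bound (by positivity) hw.1.le (by linarith [hw.2]) n
  exact this.differentiableAt (hUopen.mem_nhds hzU)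

lemma aux_tsum_ge {f Fa : ℝ → ℝ} (hpos : ∀ x : ℝ, 0 ≤ x → 0 ≤ f x)
    (hanti : AntitoneOn f (Ici 0))
    (hd : ∀ x : ℝ, 0 ≤ x → HasDerivAt Fa (f x) x)
    (hlim : Tendsto Fa atTop (𝓝 0))
    (hsum : Summable (fun n : ℕ => f n)) :
    -Fa 0 ≤ ∑' n : ℕ, f n := by
  have hbound : ∀ N : ℕ, Fa N - Fa 0 ≤ ∑' n : ℕ, f n := by
    intro N
    have hint : ∫ x in (0:ℝ)..(N:ℝ), f x = Fa N - Fa 0 := by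
      apply intervalIntegral.integral_eq_sub_of_hasDerivAt
      · intro y hy
        rw [uIcc_of_le (by positivity : (0:ℝ) ≤ (N:ℝ))] at hy
        exact hd y hy.1
      · apply (hanti.mono ?_).intervalIntegrable
        rw [uIcc_of_le (by positivity : (0:ℝ) ≤ (N:ℝ))]
        intro y hy
        exact hy.1
    have hle : ∫ x in (0:ℝ)..(N:ℝ), f x ≤ ∑ i ∈ Finset.range N, f i := by
      have hanti' : AntitoneOn f (Icc (0:ℝ) (0 + N)) := by
        apply hanti.mono
        intro y hy
        exact hy.1
      have := hanti'.integral_le_sum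
      simpa using this
    have hle2 : ∑ i ∈ Finset.range N, f i ≤ ∑' n : ℕ, f n :=
      Summable.sum_le_tsum _ (fun i _ => hpos i (by positivity)) hsum
    linarith [hint ▸ hle]
  have htd : Tendsto (fun N : ℕ => Fa N - Fa 0) atTop (𝓝 (0 - Fa 0)) :=
    (hlim.comp tendsto_natCast_atTop_atTop).sub_const _
  rw [zero_sub] at htd
  exact le_of_tendsto htd (Eventually.of_forall hbound)

lemma aux_real_digamma {x : ℝ} (hx : 0 < x) :
    deriv Real.Gamma x / Real.Gamma x
      = -γ + ∑' n : ℕ, (1/((n:ℝ)+1) - 1/((n:ℝ)+x)) := by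
  have hne : ∀ y : ℝ, 0 < y → ∀ m : ℕ, y ≠ -m := by
    intro y hy m
    have : -(m:ℝ) ≤ 0 := neg_nonpos.mpr (Nat.cast_nonneg m)
    exact ne_of_gt (by linarith)
  set f : ℝ → ℝ := Real.log ∘ Real.Gamma with hf
  have hc : ConvexOn ℝ (Ioi 0) f := Real.convexOn_log_Gamma
  have hder : ∀ {y : ℝ}, 0 < y → DifferentiableAt ℝ f y := by
    intro y hy
    exact (Real.differentiableAt_Gamma (hne y hy)).log (Real.Gamma_ne_zero (hne y hy))
  have h_rec : ∀ y : ℝ, 0 < y → f (y + 1) = f y + Real.log y := by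
    intro y hy
    simp only [f, Function.comp_apply, Real.Gamma_add_one hy.ne',
      Real.log_mul hy.ne' (Real.Gamma_pos_of_pos hy).ne', add_comm]
  have hder_rec : ∀ y : ℝ, 0 < y → deriv f (y + 1) = deriv f y + 1 / y := by
    intro y hy
    rw [← deriv_comp_add_const, one_div, ← Real.deriv_log,
      ← deriv_add (hder (by positivity)) (Real.differentiableAt_log hy.ne')]
    apply Filter.EventuallyEq.deriv_eq
    filter_upwards [eventually_gt_nhds hy] using h_rec
  have hN : ∀ N : ℕ, deriv f (x + N) = deriv f x + ∑ k ∈ Finset.range N, 1/(x + k) := by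
    intro N
    induction N with
    | zero => simp
    | succ N ih =>
      have hxN : 0 < x + N := by positivity
      have hcast : x + ((N:ℕ)+1:ℕ) = (x + N) + 1 := by push_cast; ring
      rw [hcast, hder_rec _ hxN, ih, Finset.sum_range_succ]
      push_cast
      ring
  have sandwich : ∀ y : ℝ, 0 < y →
      Real.log y ≤ deriv f (y+1) ∧ deriv f (y+1) ≤ Real.log (y+1) := by
    intro y hy
    have m1 : y ∈ Ioi (0:ℝ) := hy
    have m2 : y + 1 ∈ Ioi (0:ℝ) := by simp only [mem_Ioi]; linarith
    have m3 : y + 2 ∈ Ioi (0:ℝ) := by simp only [mem_Ioi]; linarith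
    constructor
    · have h := hc.slope_le_deriv m1 m2 (by linarith) (hder (by linarith))
      rw [slope_def_field, h_rec y hy] at h
      have : (f y + Real.log y - f y) / (y + 1 - y) = Real.log y := by
        rw [add_sub_cancel_left]
        field_simp
        ring
      rwa [this] at h
    · have h := hc.deriv_le_slope m2 m3 (by linarith) (hder (by linarith))
      have h2 : f (y + 2) = f (y+1) + Real.log (y+1) := by
        have := h_rec (y+1) (by linarith)
        rw [show y + 1 + 1 = y + 2 by ring] at this
        exact this
      rw [slope_def_field, h2] at h
      have : (f (y+1) + Real.log (y+1) - f (y+1)) / (y + 2 - (y+1)) = Real.log (y+1) := by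
        rw [show y + 2 - (y+1) = 1 by ring]
        field_simp
        ring
      rwa [this] at h
  set Tn : ℕ → ℝ := fun N => Real.log N - ∑ k ∈ Finset.range N, 1/(x + k) with hTn
  have hsum := aux_summable_real hx
  have claim1 : Tendsto Tn atTop (𝓝 (-γ + ∑' n : ℕ, (1/((n:ℝ)+1) - 1/((n:ℝ)+x)))) := by
    have h1 : Tendsto (fun N : ℕ => ∑ k ∈ Finset.range N, (1/((k:ℝ)+1) - 1/((k:ℝ)+x)))
        atTop (𝓝 (∑' n : ℕ, (1/((n:ℝ)+1) - 1/((n:ℝ)+x)))) := hsum.hasSum.tendsto_sum_nat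
    have h2 := Real.tendsto_harmonic_sub_log
    have h3 := h2.neg.add h1
    refine h3.congr fun N => ?_
    have hh : (harmonic N : ℝ) = ∑ k ∈ Finset.range N, 1/((k:ℝ)+1) := by
      rw [harmonic, Rat.cast_sum]
      push_cast
      simp [one_div]
    rw [Finset.sum_sub_distrib, hh]
    simp only [hTn]
    rw [show (∑ k ∈ Finset.range N, 1/((k:ℝ)+x)) = ∑ k ∈ Finset.range N, 1/(x+(k:ℝ)) from
      Finset.sum_congr rfl fun k _ => by rw [add_comm]]
    ring
  have claim2 : Tendsto (fun N : ℕ => deriv f x - Tn N) atTop (𝓝 0) := by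
    have key : ∀ N : ℕ, deriv f x - Tn N = deriv f (x + N) - Real.log N := by
      intro N
      rw [hN N]
      simp only [hTn]
      ring
    have hratio : ∀ c : ℝ, Tendsto (fun N : ℕ => Real.log (c + N) - Real.log ((N:ℝ)+1))
        atTop (𝓝 0) := by
      intro c
      have hd : Tendsto (fun N : ℕ => (c-1)/((N:ℝ)+1)) atTop (𝓝 0) :=
        Filter.Tendsto.div_atTop tendsto_const_nhds
          (tendsto_atTop_add_const_right _ 1 tendsto_natCast_atTop_atTop)
      have hr : Tendsto (fun N : ℕ => (c + (N:ℝ))/((N:ℝ)+1)) atTop (𝓝 1) := by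
        have := tendsto_const_nhds (x := (1:ℝ)) (f := atTop (α := ℕ)) |>.add hd
        rw [add_zero] at this
        refine this.congr fun N => ?_
        have : ((N:ℝ)+1) ≠ 0 := by positivity
        field_simp
        ring
      have hlog := (Real.continuousAt_log one_ne_zero).tendsto.comp hr
      rw [Real.log_one] at hlog
      apply hlog.congr'
      filter_upwards [eventually_gt_atTop ⌈|c|+1⌉₊] with N hN
      have hcN : 0 < c + (N:ℝ) := by
        have : |c| + 1 ≤ (N:ℝ) := by
          calc |c| + 1 ≤ ⌈|c|+1⌉₊ := Nat.le_ceil _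
            _ ≤ (N:ℝ) := by exact_mod_cast hN.le
        have := neg_abs_le c
        linarith
      simp only [Function.comp_apply]
      rw [Real.log_div hcN.ne' (by positivity)]
    have hb : ∀ N : ℕ, Real.log (x + N) - Real.log ((N:ℝ)+1)
          ≤ deriv f x - Tn (N+1) ∧
          deriv f x - Tn (N+1) ≤ Real.log ((x+1) + N) - Real.log ((N:ℝ)+1) := by
      intro N
      have hxN : 0 < x + N := by positivity
      have hs := sandwich (x + N) hxN
      have hkey := key (N+1)
      have hc1 : x + ((N:ℕ)+1:ℕ) = (x + N) + 1 := by push_cast; ring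
      have hc2 : (((N:ℕ)+1:ℕ):ℝ) = (N:ℝ)+1 := by push_cast; ring
      rw [hc1, hc2] at hkey
      constructor
      · rw [hkey]; linarith [hs.1]
      · rw [hkey]
        have hlogeq : Real.log (x + (N:ℝ) + 1) = Real.log ((x+1) + N) := by ring_nf
        linarith [hs.2, hlogeq]
    have h0 : Tendsto (fun N : ℕ => deriv f x - Tn (N+1)) atTop (𝓝 0) :=
      tendsto_of_tendsto_of_tendsto_of_le_of_le (hratio x) (hratio (x+1))
        (fun N => (hb N).1) (fun N => (hb N).2)
    exact (tendsto_add_atTop_iff_nat 1).mp h0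
  have hTlim : Tendsto Tn atTop (𝓝 (deriv f x)) := by
    have h' := (tendsto_const_nhds (x := deriv f x) (f := atTop (α := ℕ))).sub claim2
    rw [sub_zero] at h'
    refine h'.congr fun N => ?_
    ring
  have hEq : deriv f x = -γ + ∑' n : ℕ, (1/((n:ℝ)+1) - 1/((n:ℝ)+x)) :=
    tendsto_nhds_unique hTlim claim1
  have hfinal : deriv f x = deriv Real.Gamma x / Real.Gamma x := by
    rw [hf, Function.comp_def,
      deriv.log (Real.differentiableAt_Gamma (hne x hx)) (Real.Gamma_pos_of_pos hx).ne']
  rw [← hfinal, hEq]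

lemma aux_hne_real {y : ℝ} (hy : 0 < y) : ∀ m : ℕ, y ≠ -m := by
  intro m
  have : -(m:ℝ) ≤ 0 := neg_nonpos.mpr (Nat.cast_nonneg m)
  exact ne_of_gt (by linarith)

lemma aux_hne_c {w : ℂ} (hw : 0 < w.re) : ∀ m : ℕ, w ≠ -m := by
  intro m h
  rw [h] at hw
  simp only [Complex.neg_re, Complex.natCast_re] at hw
  have : (0:ℝ) ≤ (m:ℝ) := Nat.cast_nonneg m
  linarith

lemma aux_bridge {x : ℝ} (hx : 0 < x) :
    deriv Complex.Gamma (x:ℂ) = ((deriv Real.Gamma x : ℝ) : ℂ) := by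
  have hrc : (0:ℝ) < ((x:ℂ)).re := by simpa using hx
  have h1 : HasDerivAt Complex.Gamma (deriv Complex.Gamma (x:ℂ)) (x:ℂ) :=
    (Complex.differentiableAt_Gamma _ (aux_hne_c hrc)).hasDerivAt
  have h2 := h1.comp_ofReal
  have h4 := (Real.differentiableAt_Gamma (aux_hne_real hx)).hasDerivAt.ofReal_comp
  have h3 : HasDerivAt (fun y : ℝ => Complex.Gamma (y:ℂ)) ((deriv Real.Gamma x : ℝ) : ℂ) x :=
    h4.congr_of_eventuallyEq (Eventually.of_forall fun y => Complex.Gamma_ofReal y)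
  exact h2.unique h3

lemma aux_agree {x : ℝ} (hx : 0 < x) :
    deriv Complex.Gamma (x:ℂ) / Complex.Gamma (x:ℂ)
      = -(γ:ℂ) + ∑' n : ℕ, (1/((n:ℂ)+1) - 1/((n:ℂ)+(x:ℂ))) := by
  rw [aux_bridge hx, Complex.Gamma_ofReal, ← Complex.ofReal_div, aux_real_digamma hx]
  push_cast [Complex.ofReal_tsum]
  rfl
lemma aux_psi_eq {s : ℂ} (hs : 0 < s.re) :
    deriv Complex.Gamma s / Complex.Gamma s
      = -(γ:ℂ) + ∑' n : ℕ, (1/((n:ℂ)+1) - 1/((n:ℂ)+s)) := by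
  set Ω : Set ℂ := {z : ℂ | 0 < z.re} with hΩdef
  have hΩ : IsOpen Ω := isOpen_lt continuous_const Complex.continuous_re
  have hΓan : AnalyticOnNhd ℂ Complex.Gamma Ω :=
    DifferentiableOn.analyticOnNhd
      (fun w hw => (Complex.differentiableAt_Gamma w (aux_hne_c hw)).differentiableWithinAt) hΩ
  have hψ : AnalyticOnNhd ℂ (fun w => deriv Complex.Gamma w / Complex.Gamma w) Ω :=
    hΓan.deriv.div hΓan (fun w hw => Complex.Gamma_ne_zero (aux_hne_c hw))
  have hg : AnalyticOnNhd ℂ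
      (fun w : ℂ => -(γ:ℂ) + ∑' n : ℕ, (1/((n:ℂ)+1) - 1/((n:ℂ)+w))) Ω :=
    (analyticOnNhd_const).add aux_g_analytic
  have hpre : IsPreconnected Ω := (convex_halfSpace_re_gt 0).isPreconnected
  have h1 : (1:ℂ) ∈ Ω := by simp [hΩdef]
  have hfreq : ∃ᶠ z in 𝓝[≠] (1:ℂ),
      deriv Complex.Gamma z / Complex.Gamma z
        = -(γ:ℂ) + ∑' n : ℕ, (1/((n:ℂ)+1) - 1/((n:ℂ)+z)) := by
    have hu : Tendsto (fun n : ℕ => (((1 + 1/((n:ℝ)+1)) : ℝ) : ℂ)) atTop (𝓝[≠] (1:ℂ)) := by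
      rw [tendsto_nhdsWithin_iff]
      constructor
      · have hr : Tendsto (fun n : ℕ => (1 + 1/((n:ℝ)+1))) atTop (𝓝 1) := by
          have hd : Tendsto (fun n : ℕ => 1/((n:ℝ)+1)) atTop (𝓝 0) :=
            Filter.Tendsto.div_atTop tendsto_const_nhds
              (tendsto_atTop_add_const_right _ 1 tendsto_natCast_atTop_atTop)
          have := (tendsto_const_nhds (x := (1:ℝ)) (f := atTop (α := ℕ))).add hd
          rwa [add_zero] at this
        have := (Complex.continuous_ofReal.tendsto 1).comp hr
        simpa [Function.comp_def] using this
      · filter_upwards with n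
        simp only [mem_compl_iff, mem_singleton_iff]
        intro h
        rw [show (1:ℂ) = ((1:ℝ):ℂ) by norm_num] at h
        have h' := Complex.ofReal_inj.mp h
        have h1n : (0:ℝ) < 1/((n:ℝ)+1) := by positivity
        linarith
    apply hu.frequently
    apply Frequently.of_forall
    intro n
    exact aux_agree (by positivity)
  have := hψ.eqOn_of_preconnected_of_frequently_eq hg hpre h1 hfreq
  exact this hs

lemma aux_C_bound {σ : ℝ} (hσ : 1/2 ≤ σ) :
    Real.log σ + Real.log 2 ≤ ∑' n : ℕ, (1/((n:ℝ)+1/2) - 1/((n:ℝ)+σ)) := by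
  have hσ0 : 0 < σ := lt_of_lt_of_le one_half_pos hσ
  set f : ℝ → ℝ := fun x => 1/(x+1/2) - 1/(x+σ) with hfdef
  set Fa : ℝ → ℝ := fun x => Real.log (x+1/2) - Real.log (x+σ) with hFadef
  have hform : ∀ x : ℝ, 0 ≤ x → f x = (σ - 1/2)/((x+1/2)*(x+σ)) := by
    intro x hx
    simp only [hfdef]
    rw [div_sub_div _ _ (by positivity) (by positivity)]
    congr 1
    ring
  have hpos : ∀ x : ℝ, 0 ≤ x → 0 ≤ f x := by
    intro x hx
    rw [hform x hx]
    apply div_nonneg (by linarith) (by positivity)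
  have hanti : AntitoneOn f (Ici 0) := by
    intro a ha b hb hab
    simp only [mem_Ici] at ha hb
    rw [hform a ha, hform b hb]
    apply div_le_div_of_nonneg_left (by linarith) (by positivity)
    nlinarith
  have hd : ∀ x : ℝ, 0 ≤ x → HasDerivAt Fa (f x) x := by
    intro x hx
    have h1 : HasDerivAt (fun y : ℝ => y + 1/2) 1 x := (hasDerivAt_id x).add_const _
    have h2 : HasDerivAt (fun y : ℝ => y + σ) 1 x := (hasDerivAt_id x).add_const _
    have h3 := h1.log (by positivity : x + 1/2 ≠ 0)
    have h4 := h2.log (by positivity : x + σ ≠ 0)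
    simpa [hfdef, hFadef] using h3.fun_sub h4
  have hlim : Tendsto Fa atTop (𝓝 0) := by
    have hr : Tendsto (fun x : ℝ => (x+1/2)/(x+σ)) atTop (𝓝 1) := by
      have hd0 : Tendsto (fun x : ℝ => (1/2-σ)/(x+σ)) atTop (𝓝 0) :=
        Filter.Tendsto.div_atTop tendsto_const_nhds
          (tendsto_atTop_add_const_right _ σ tendsto_id)
      have := (tendsto_const_nhds (x := (1:ℝ)) (f := atTop (α := ℝ))).add hd0
      rw [add_zero] at this
      apply this.congr'
      filter_upwards [eventually_gt_atTop 0] with x hx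
      have : x + σ ≠ 0 := by positivity
      field_simp
      ring
    have hlog := (Real.continuousAt_log one_ne_zero).tendsto.comp hr
    rw [Real.log_one] at hlog
    apply hlog.congr'
    filter_upwards [eventually_gt_atTop 0] with x hx
    simp only [Function.comp_apply, hFadef]
    rw [Real.log_div (by positivity) (by positivity)]
  have hsum : Summable (fun n : ℕ => f n) := by
    have h1 := aux_summable_real one_half_pos
    have h2 := aux_summable_real hσ0
    apply (h2.sub h1).congr
    intro n
    simp only [hfdef]
    ring
  have := aux_tsum_ge hpos hanti hd hlim hsum
  have hFa0 : Fa 0 = Real.log (1/2) - Real.log σ := by simp [hFadef]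
  rw [hFa0] at this
  rw [show Real.log (1/2) = -Real.log 2 by rw [one_div, Real.log_inv]] at this
  calc Real.log σ + Real.log 2 = -(-Real.log 2 - Real.log σ) := by ring
    _ ≤ ∑' n : ℕ, f n := this
    _ = _ := by apply tsum_congr; intro n; simp [hfdef]

lemma aux_B_bound {σ t : ℝ} (hσ : 0 < σ)
    (hsum : Summable (fun n : ℕ => 1/((n:ℝ)+σ) - ((n:ℝ)+σ)/(((n:ℝ)+σ)^2+t^2))) :
    Real.log (Real.sqrt (σ^2+t^2)) - Real.log σ
      ≤ ∑' n : ℕ, (1/((n:ℝ)+σ) - ((n:ℝ)+σ)/(((n:ℝ)+σ)^2+t^2)) := by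
  set f : ℝ → ℝ := fun x => 1/(x+σ) - (x+σ)/((x+σ)^2+t^2) with hfdef
  set Fa : ℝ → ℝ := fun x => Real.log (x+σ) - Real.log ((x+σ)^2+t^2)/2 with hFadef
  have hform : ∀ x : ℝ, 0 ≤ x → f x = t^2/((x+σ)*((x+σ)^2+t^2)) := by
    intro x hx
    simp only [hfdef]
    rw [div_sub_div _ _ (by positivity) (by positivity)]
    congr 1
    ring
  have hpos : ∀ x : ℝ, 0 ≤ x → 0 ≤ f x := by
    intro x hx
    rw [hform x hx]
    positivity
  have hanti : AntitoneOn f (Ici 0) := by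
    intro a ha b hb hab
    simp only [mem_Ici] at ha hb
    rw [hform a ha, hform b hb]
    apply div_le_div_of_nonneg_left (by positivity) (by positivity)
    have huv : a + σ ≤ b + σ := by linarith
    have hu1 : 0 < a + σ := by linarith
    have hu2 : 0 < b + σ := by linarith
    nlinarith [mul_nonneg (sub_nonneg.2 huv)
      (add_nonneg (add_nonneg (add_nonneg (sq_nonneg (b+σ)) (mul_pos hu1 hu2).le)
        (sq_nonneg (a+σ))) (sq_nonneg t))]
  have hd : ∀ x : ℝ, 0 ≤ x → HasDerivAt Fa (f x) x := by
    intro x hx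
    have h1 : HasDerivAt (fun y : ℝ => y + σ) 1 x := (hasDerivAt_id x).add_const _
    have h3 := h1.log (by positivity : x + σ ≠ 0)
    have h2 : HasDerivAt (fun y : ℝ => (y+σ)^2+t^2) (2*(x+σ)) x := by
      have := (h1.fun_pow 2).add_const (t^2)
      refine this.congr_deriv ?_
      ring
    have h4 := h2.log (by positivity : (x+σ)^2+t^2 ≠ 0)
    have h5 := h3.fun_sub (h4.div_const 2)
    refine h5.congr_deriv ?_
    simp only [hfdef]
    ring
  have hlim : Tendsto Fa atTop (𝓝 0) := by
    have hr : Tendsto (fun x : ℝ => (x+σ)^2/((x+σ)^2+t^2)) atTop (𝓝 1) := by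
      have hdenom : Tendsto (fun x : ℝ => (x+σ)^2+t^2) atTop atTop := by
        apply tendsto_atTop_add_const_right
        exact (tendsto_pow_atTop two_ne_zero).comp
          (tendsto_atTop_add_const_right _ σ tendsto_id)
      have hd0 : Tendsto (fun x : ℝ => -t^2/((x+σ)^2+t^2)) atTop (𝓝 0) :=
        Filter.Tendsto.div_atTop tendsto_const_nhds hdenom
      have := (tendsto_const_nhds (x := (1:ℝ)) (f := atTop (α := ℝ))).add hd0
      rw [add_zero] at this
      apply this.congr'
      filter_upwards [eventually_gt_atTop 0] with x hx
      have hne : (x+σ)^2+t^2 ≠ 0 := by positivity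
      field_simp
      ring
    have hlog := ((Real.continuousAt_log one_ne_zero).tendsto.comp hr).div_const (2:ℝ)
    rw [Real.log_one, zero_div] at hlog
    apply hlog.congr'
    filter_upwards [eventually_gt_atTop 0] with x hx
    simp only [Function.comp_apply, hFadef]
    rw [Real.log_div (by positivity) (by positivity), Real.log_pow]
    push_cast
    ring
  have := aux_tsum_ge hpos hanti hd hlim (hsum.congr (fun n => by simp [hfdef]))
  have hFa0 : Fa 0 = Real.log σ - Real.log (σ^2+t^2)/2 := by simp [hFadef]
  have hsqrt : Real.log (Real.sqrt (σ^2+t^2)) = Real.log (σ^2+t^2)/2 :=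
    Real.log_sqrt (by positivity)
  rw [hFa0] at this
  calc Real.log (Real.sqrt (σ^2+t^2)) - Real.log σ
      = -(Real.log σ - Real.log (σ^2+t^2)/2) := by rw [hsqrt]; ring
    _ ≤ ∑' n : ℕ, f n := this
    _ = _ := by apply tsum_congr; intro n; simp [hfdef]

lemma aux_numeric : γ + Real.log 2 ≤ 4/3 := by
  have h := Real.eulerMascheroniConstant_lt_eulerMascheroniSeq' 16
  rw [Real.eulerMascheroniSeq'] at h
  norm_num at h
  have h16 : Real.log 16 = 4 * Real.log 2 := by
    rw [show (16:ℝ) = 2^4 by norm_num, Real.log_pow]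
    norm_num
  rw [h16] at h
  have hl2 := Real.log_two_gt_d9
  linarith

lemma aux_re_bound {s : ℂ} (hs : 1/2 < s.re) :
    Real.log (‖s‖) - (γ + Real.log 2)
      ≤ (deriv Complex.Gamma s / Complex.Gamma s).re := by
  set σ := s.re with hσdef
  set t := s.im with htdef
  have hσ : 0 < σ := by rw [hσdef]; linarith
  rw [aux_psi_eq hσ]
  rw [Complex.add_re, Complex.neg_re, Complex.ofReal_re,
    Complex.re_tsum (aux_summable_complex hσ)]
  have hterm : ∀ n : ℕ, (1/((n:ℂ)+1) - 1/((n:ℂ)+s)).re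
      = (1/((n:ℝ)+1) - 1/((n:ℝ)+1/2)) + ((1/((n:ℝ)+1/2) - 1/((n:ℝ)+σ))
        + (1/((n:ℝ)+σ) - ((n:ℝ)+σ)/(((n:ℝ)+σ)^2+t^2))) := by
    intro n
    have h1 : ((1:ℂ)/((n:ℂ)+1)).re = 1/((n:ℝ)+1) := by
      rw [show ((n:ℂ)+1) = (((n:ℝ)+1:ℝ):ℂ) by push_cast; ring, ← Complex.ofReal_one,
        ← Complex.ofReal_div, Complex.ofReal_re]
    have h2 : ((1:ℂ)/((n:ℂ)+s)).re = ((n:ℝ)+σ)/(((n:ℝ)+σ)^2+t^2) := by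
      rw [one_div, Complex.inv_re, Complex.normSq_apply]
      simp only [Complex.add_re, Complex.add_im, Complex.natCast_re, Complex.natCast_im,
        zero_add, ← hσdef, ← htdef]
      rw [div_eq_div_iff]
      · ring
      · have h0 : (0:ℝ) < (n:ℝ)+σ := by positivity
        have := mul_self_nonneg t
        nlinarith
      · positivity
    rw [Complex.sub_re, h1, h2]
    ring
  rw [tsum_congr hterm]
  have SA : Summable (fun n : ℕ => 1/((n:ℝ)+1) - 1/((n:ℝ)+1/2)) :=
    aux_summable_real one_half_pos
  have Sσ : Summable (fun n : ℕ => 1/((n:ℝ)+1) - 1/((n:ℝ)+σ)) := aux_summable_real hσ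
  have SC : Summable (fun n : ℕ => 1/((n:ℝ)+1/2) - 1/((n:ℝ)+σ)) := by
    apply (Sσ.sub SA).congr
    intro n
    ring
  have Stot : Summable (fun n : ℕ => (1/((n:ℝ)+1) - 1/((n:ℝ)+1/2)) + ((1/((n:ℝ)+1/2) - 1/((n:ℝ)+σ))
        + (1/((n:ℝ)+σ) - ((n:ℝ)+σ)/(((n:ℝ)+σ)^2+t^2)))) := by
    apply ((Complex.hasSum_re (aux_summable_complex hσ).hasSum).summable).congr
    intro n
    rw [hterm n]
  have SB : Summable (fun n : ℕ => 1/((n:ℝ)+σ) - ((n:ℝ)+σ)/(((n:ℝ)+σ)^2+t^2)) := by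
    apply ((Stot.sub SA).sub SC).congr
    intro n
    ring
  rw [Summable.tsum_add SA (SC.add SB), Summable.tsum_add SC SB]
  have hAval : ∑' n : ℕ, (1/((n:ℝ)+1) - 1/((n:ℝ)+1/2)) = -2 * Real.log 2 := by
    have hdig := aux_real_digamma one_half_pos
    have hπ : Real.sqrt Real.pi ≠ 0 := by
      have := Real.sqrt_pos.mpr Real.pi_pos
      linarith
    rw [Real.hasDerivAt_Gamma_one_half.deriv, Real.Gamma_one_half_eq] at hdig
    have : -Real.sqrt Real.pi * (γ + 2 * Real.log 2) / Real.sqrt Real.pi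
        = -(γ + 2 * Real.log 2) := by
      field_simp
    rw [this] at hdig
    linarith [hdig]
  have hC := aux_C_bound hs.le
  have hB := aux_B_bound hσ SB
  have habs : ‖s‖ = Real.sqrt (σ^2+t^2) := by
    rw [Complex.norm_def, Complex.normSq_apply]
    congr 1
    ring
  rw [habs, hAval]
  linarith [hC, hB]

theorem stmt6 (s : ℂ) (hs : 1/2 < s.re) :
    Real.log (‖s‖) - 4/3 ≤ (deriv Complex.Gamma s / Complex.Gamma s).re ∧
    Real.log (‖s‖ + 2) - (4/3 + Real.log 5) ≤ Real.log (‖s‖) - 4/3 := by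
  constructor
  · have h1 := aux_re_bound hs
    have h2 := aux_numeric
    linarith
  · have habs : 1/2 ≤ ‖s‖ :=
      le_trans (le_trans hs.le (le_abs_self s.re)) (Complex.abs_re_le_norm s)
    have habs0 : 0 < ‖s‖ := by linarith
    have key : Real.log (‖s‖ + 2) ≤ Real.log 5 + Real.log (‖s‖) := by
      rw [← Real.log_mul (by norm_num) habs0.ne']
      apply Real.log_le_log (by linarith)
      linarith
    linarith
end

section
/- Let x ≥ 2 and define φ₆(v) = 1 − ((e^{−v} − e^{−2v})/v)² for v > 0. Then φ₆(v) ≥ φ₆(1)·v for 0 < v ≤ 1 and φ₆(v) ≥ φ₆(1) for v ≥ 1; consequently, for 0 < β₀ < 1, k₁(1) − k₁(β₀) ≥ (9/10)(log x)² · min(1, (1−β₀) log x), where k₁(s) = ((x^{2(s−1)} − x^{s−1})/(s−1))² and k₁(1) = (log x)². -/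
open Real intervalIntegral

lemma int_exp_neg (v : ℝ) (hv : v ≠ 0) :
    ∫ t in (1:ℝ)..2, Real.exp (-v * t) = (Real.exp (-v) - Real.exp (-2*v))/v := by
  rw [intervalIntegral.integral_comp_mul_left (fun u => Real.exp u) (neg_ne_zero.2 hv),
    integral_exp, smul_eq_mul, inv_neg, neg_mul]
  rw [show -v*1 = -v by ring, show -v*2 = -2*v by ring]
  rw [div_eq_mul_inv, mul_comm]
  ring

lemma keyA (v : ℝ) (hv : 0 < v) (hv1 : v ≤ 1) :
    (Real.exp (-v) - Real.exp (-2*v))/v ≤ (1-v) + v*(Real.exp (-1) - Real.exp (-2)) := by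
  have h1 : ∫ t in (1:ℝ)..2, Real.exp (-v * t) = (Real.exp (-v) - Real.exp (-2*v))/v :=
    int_exp_neg v hv.ne'
  have h2 : ∫ t in (1:ℝ)..2, Real.exp (-1 * t) = (Real.exp (-1) - Real.exp (-2*1))/1 :=
    int_exp_neg 1 one_ne_zero
  have h3 : ∫ t in (1:ℝ)..2, ((1-v) + v * Real.exp (-t)) =
      (1-v) + v*(Real.exp (-1) - Real.exp (-2)) := by
    rw [intervalIntegral.integral_add (by apply Continuous.intervalIntegrable; fun_prop) (by apply Continuous.intervalIntegrable; fun_prop),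
      intervalIntegral.integral_const, intervalIntegral.integral_const_mul]
    have : ∫ t in (1:ℝ)..2, Real.exp (-t) = Real.exp (-1) - Real.exp (-2) := by
      simpa using h2
    rw [this]; norm_num
  rw [← h1, ← h3]
  apply intervalIntegral.integral_mono_on (by norm_num) (by apply Continuous.intervalIntegrable; fun_prop) (by apply Continuous.intervalIntegrable; fun_prop)
  intro t ht
  have := convexOn_exp.2 (Set.mem_univ (0:ℝ)) (Set.mem_univ (-t))
    (by linarith : (0:ℝ) ≤ 1 - v) hv.le (by ring)
  simpa [smul_eq_mul, mul_comm] using this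

lemma key1 (v : ℝ) (hv : 0 < v) (hv1 : v ≤ 1) :
    (1 - (Real.exp (-1) - Real.exp (-2))^2) * v ≤
      1 - ((Real.exp (-v) - Real.exp (-2*v))/v)^2 := by
  set a := (Real.exp (-v) - Real.exp (-2*v))/v with ha
  set g1 := Real.exp (-1) - Real.exp (-2) with hg1
  have ha0 : 0 ≤ a := by
    apply div_nonneg _ hv.le
    have : Real.exp (-2*v) ≤ Real.exp (-v) := Real.exp_le_exp.2 (by linarith)
    linarith
  have hg10 : 0 ≤ g1 := by
    have : Real.exp (-2) ≤ Real.exp (-1) := Real.exp_le_exp.2 (by norm_num)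
    linarith
  have hA : a ≤ (1-v) + v*g1 := keyA v hv hv1
  have hsq : a^2 ≤ ((1-v) + v*g1)^2 := by
    apply pow_le_pow_left₀ ha0 hA
  nlinarith [mul_nonneg (mul_nonneg hv.le (by linarith : (0:ℝ) ≤ 1 - v)) (sq_nonneg (1 - g1))]

lemma key2 (v : ℝ) (hv : 1 ≤ v) :
    ((Real.exp (-v) - Real.exp (-2*v))/v)^2 ≤ (Real.exp (-1) - Real.exp (-2))^2 := by
  have hv0 : (0:ℝ) < v := by linarith
  set t := Real.exp (-v) with hT
  set s := Real.exp (-1) with hS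
  have hts : t ≤ s := Real.exp_le_exp.2 (by linarith)
  have ht0 : 0 < t := Real.exp_pos _
  have h2v : Real.exp (-2*v) = t^2 := by
    rw [hT, sq, ← Real.exp_add]; ring_nf
  have h2 : Real.exp (-2) = s^2 := by
    rw [hS, sq, ← Real.exp_add]; ring_nf
  have hshalf : s < 1/2 := by
    have he : (2:ℝ) < Real.exp 1 := by nlinarith [Real.exp_one_gt_d9]
    rw [hS, Real.exp_neg]
    calc (Real.exp 1)⁻¹ < 2⁻¹ := by
          apply inv_strictAnti₀ (by norm_num) he
      _ = 1/2 := by norm_num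
  have hnum : t - t^2 ≤ s - s^2 := by nlinarith
  have hnum0 : 0 ≤ t - t^2 := by nlinarith
  have ha : (t - t^2)/v ≤ s - s^2 :=
    le_trans (div_le_self hnum0 hv) hnum
  have ha0 : 0 ≤ (t - t^2)/v := div_nonneg hnum0 hv0.le
  rw [h2v, h2]
  calc ((t - t^2)/v)^2 ≤ (s - s^2)^2 := pow_le_pow_left₀ ha0 ha 2
    _ = _ := by ring

lemma key5 : (Real.exp (-1) - Real.exp (-2))^2 ≤ 1/10 := by
  have h2 : Real.exp (-2) = Real.exp (-1)^2 := by
    rw [sq, ← Real.exp_add]; ring_nf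
  set s := Real.exp (-1) with hS
  have hs0 : 0 < s := Real.exp_pos _
  have hs1 : s < 0.37 := by
    rw [hS, Real.exp_neg]
    have he : (2.718:ℝ) < Real.exp 1 := by nlinarith [Real.exp_one_gt_d9]
    rw [show (0.37:ℝ) = (1/0.37)⁻¹ by norm_num]
    apply inv_strictAnti₀ (by norm_num)
    linarith
  rw [h2]
  have hm : (0.37 - s)*(0.63 - s) > 0 := mul_pos (by linarith) (by linarith)
  have hp : (0:ℝ) < s*(1-s) := mul_pos hs0 (by linarith)
  nlinarith [hm, hp]

theorem stmt9 (x : ℝ) (hx : 2 ≤ x) :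
    let φ : ℝ → ℝ := fun v => 1 - ((Real.exp (-v) - Real.exp (-2 * v)) / v) ^ 2
    (∀ v : ℝ, 0 < v → v ≤ 1 → φ 1 * v ≤ φ v) ∧
    (∀ v : ℝ, 1 ≤ v → φ 1 ≤ φ v) ∧
    (∀ β₀ : ℝ, 0 < β₀ → β₀ < 1 →
      (9/10) * (Real.log x) ^ 2 * min 1 ((1 - β₀) * Real.log x)
        ≤ (Real.log x) ^ 2 - ((x ^ (2 * (β₀ - 1)) - x ^ (β₀ - 1)) / (β₀ - 1)) ^ 2) := by
  intro φ
  have hφ : ∀ v : ℝ, φ v = 1 - ((Real.exp (-v) - Real.exp (-2 * v)) / v) ^ 2 := fun v => rfl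
  have hφ1 : φ 1 = 1 - (Real.exp (-1) - Real.exp (-2))^2 := by
    rw [hφ]; norm_num
  have part1 : ∀ v : ℝ, 0 < v → v ≤ 1 → φ 1 * v ≤ φ v := by
    intro v hv hv1
    rw [hφ1, hφ]
    exact key1 v hv hv1
  have part2 : ∀ v : ℝ, 1 ≤ v → φ 1 ≤ φ v := by
    intro v hv
    rw [hφ1, hφ]
    have := key2 v hv
    linarith
  refine ⟨part1, part2, ?_⟩
  intro β₀ hb0 hb1
  have hx0 : (0:ℝ) < x := by linarith
  set L := Real.log x with hLdef
  have hL0 : 0 < L := Real.log_pos (by linarith)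
  set v := (1 - β₀) * L with hvdef
  have hv0 : 0 < v := mul_pos (by linarith) hL0
  have hr1 : x ^ (2 * (β₀ - 1)) = Real.exp (-(2*v)) := by
    rw [Real.rpow_def_of_pos hx0, ← hLdef, hvdef]; ring_nf
  have hr2 : x ^ (β₀ - 1) = Real.exp (-v) := by
    rw [Real.rpow_def_of_pos hx0, ← hLdef, hvdef]; ring_nf
  have hb1' : β₀ - 1 ≠ 0 := by intro h; rw [sub_eq_zero] at h; exact absurd h (ne_of_lt hb1)
  have hkey : ((x ^ (2 * (β₀ - 1)) - x ^ (β₀ - 1)) / (β₀ - 1)) ^ 2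
      = L^2 * ((Real.exp (-v) - Real.exp (-2*v))/v)^2 := by
    rw [hr1, hr2]
    have hbv : β₀ - 1 = -v / L := by
      rw [hvdef]; field_simp; ring
    rw [hbv]
    rw [div_div_eq_mul_div, div_pow, div_pow]
    rw [show -(2*v) = -2*v by ring]
    field_simp
    ring
  rw [hkey]
  have hφv := hφ v
  have h910 : (9:ℝ)/10 ≤ 1 - (Real.exp (-1) - Real.exp (-2))^2 := by
    have := key5; linarith
  rcases le_or_gt v 1 with hv1 | hv1
  · rw [min_eq_right hv1]
    have h1 := key1 v hv0 hv1
    have h2 : (9/10) * v ≤ 1 - ((Real.exp (-v) - Real.exp (-2*v))/v)^2 := by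
      nlinarith
    calc (9/10) * L^2 * v = L^2 * ((9/10) * v) := by ring
      _ ≤ L^2 * (1 - ((Real.exp (-v) - Real.exp (-2*v))/v)^2) := by
          apply mul_le_mul_of_nonneg_left h2 (sq_nonneg L)
      _ = L^2 - L^2 * ((Real.exp (-v) - Real.exp (-2*v))/v)^2 := by ring
  · rw [min_eq_left hv1.le]
    have h2 := key2 v hv1.le
    have h3 : (9:ℝ)/10 ≤ 1 - ((Real.exp (-v) - Real.exp (-2*v))/v)^2 := by nlinarith
    calc (9/10) * L^2 * 1 = L^2 * (9/10) := by ring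
      _ ≤ L^2 * (1 - ((Real.exp (-v) - Real.exp (-2*v))/v)^2) := by
          apply mul_le_mul_of_nonneg_left h3 (sq_nonneg L)
      _ = L^2 - L^2 * ((Real.exp (-v) - Real.exp (-2*v))/v)^2 := by ring
end

section
/- For x ≥ 101 and all real t, |k₁(−1/2 + it)| ≤ k₁(−1/2) · ((1+101^{−3/2})/(1−101^{−3/2}))² · 9/(9+4t²), where k₁(s) = ((x^{2(s−1)} − x^{s−1})/(s−1))². -/
theorem stmt14 (x t : ℝ) (hx : 101 ≤ x) :
    ‖(((x : ℂ) ^ ((2 : ℂ) * (((-1/2 : ℂ) + t * Complex.I) - 1))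
        - (x : ℂ) ^ (((-1/2 : ℂ) + t * Complex.I) - 1)) /
          (((-1/2 : ℂ) + t * Complex.I) - 1)) ^ 2‖
    ≤ ((x ^ (-3 : ℝ) - x ^ (-(3/2) : ℝ)) / (-(3/2))) ^ 2
      * ((1 + (101 : ℝ) ^ (-(3/2) : ℝ)) / (1 - (101 : ℝ) ^ (-(3/2) : ℝ))) ^ 2
      * (9 / (9 + 4 * t ^ 2)) := by
  have hx0 : (0:ℝ) < x := by linarith
  set p : ℝ := x ^ (-(3/2) : ℝ) with hp
  set q : ℝ := x ^ (-3 : ℝ) with hq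
  set a : ℝ := (101:ℝ) ^ (-(3/2) : ℝ) with ha
  have hp0 : 0 < p := Real.rpow_pos_of_pos hx0 _
  have hq0 : 0 < q := Real.rpow_pos_of_pos hx0 _
  have ha0 : 0 < a := Real.rpow_pos_of_pos (by norm_num) _
  have hpa : p ≤ a := by
    rw [hp, ha]
    have h1 : (101:ℝ) ^ ((3/2):ℝ) ≤ x ^ ((3/2):ℝ) :=
      Real.rpow_le_rpow (by norm_num) hx (by norm_num)
    rw [Real.rpow_neg (by norm_num : (0:ℝ) ≤ 101), Real.rpow_neg hx0.le]
    exact inv_anti₀ (Real.rpow_pos_of_pos (by norm_num) _) h1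
  have ha1 : a < 1 := by
    rw [ha]
    have : (101:ℝ) ^ (-(3/2):ℝ) < 101 ^ (0:ℝ) :=
      Real.rpow_lt_rpow_of_exponent_lt (by norm_num) (by norm_num)
    simpa using this
  have hq_eq : q = p ^ 2 := by
    rw [hp, hq, ← Real.rpow_natCast (x ^ (-(3/2):ℝ)) 2, ← Real.rpow_mul hx0.le]
    norm_num
  have hs1abs : ‖((-1/2 : ℂ) + t * Complex.I) - 1‖ ^ 2 = 9/4 + t^2 := by
    rw [Complex.sq_norm, Complex.normSq_apply]
    simp
    ring
  have h2re : ((2:ℂ) * (((-1/2:ℂ) + t*Complex.I) - 1)).re = (-3:ℝ) := by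
    simp
    norm_num
  have h1re : ((((-1/2:ℂ) + t*Complex.I) - 1)).re = (-(3/2):ℝ) := by
    simp
    norm_num
  have habs2 : ‖(x:ℂ) ^ ((2:ℂ) * (((-1/2:ℂ) + t*Complex.I) - 1))‖ = q := by
    rw [Complex.norm_cpow_eq_rpow_re_of_pos hx0, h2re, hq]
  have habs1 : ‖(x:ℂ) ^ ((((-1/2:ℂ) + t*Complex.I) - 1))‖ = p := by
    rw [Complex.norm_cpow_eq_rpow_re_of_pos hx0, h1re, hp]
  have hN : ‖(x : ℂ) ^ ((2 : ℂ) * (((-1/2 : ℂ) + t * Complex.I) - 1))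
      - (x : ℂ) ^ (((-1/2 : ℂ) + t * Complex.I) - 1)‖ ≤ q + p := by
    have h := norm_sub_le ((x : ℂ) ^ ((2 : ℂ) * (((-1/2 : ℂ) + t * Complex.I) - 1)))
      ((x : ℂ) ^ (((-1/2 : ℂ) + t * Complex.I) - 1))
    rw [habs2, habs1] at h
    exact h
  have key : (q+p)^2 * (1-a)^2 ≤ (p-q)^2 * (1+a)^2 := by
    have h1 : (q+p)*(1-a) ≤ (p-q)*(1+a) := by nlinarith [mul_le_mul_of_nonneg_right hpa hp0.le]
    have h0 : 0 ≤ (q+p)*(1-a) := by nlinarith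
    calc (q+p)^2 * (1-a)^2 = ((q+p)*(1-a))^2 := by ring
      _ ≤ ((p-q)*(1+a))^2 := by nlinarith
      _ = (p-q)^2 * (1+a)^2 := by ring
  have hden : (0:ℝ) < 9/4 + t^2 := by positivity
  calc ‖(((x : ℂ) ^ ((2 : ℂ) * (((-1/2 : ℂ) + t * Complex.I) - 1))
        - (x : ℂ) ^ (((-1/2 : ℂ) + t * Complex.I) - 1)) /
          (((-1/2 : ℂ) + t * Complex.I) - 1)) ^ 2‖
      = (‖(x : ℂ) ^ ((2 : ℂ) * (((-1/2 : ℂ) + t * Complex.I) - 1))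
        - (x : ℂ) ^ (((-1/2 : ℂ) + t * Complex.I) - 1)‖)^2 / (9/4 + t^2) := by
        rw [norm_pow, norm_div, div_pow, hs1abs]
    _ ≤ (q+p)^2 / (9/4 + t^2) := by
        gcongr
    _ ≤ ((q - p) / (-(3/2))) ^ 2 * ((1 + a) / (1 - a)) ^ 2 * (9 / (9 + 4 * t ^ 2)) := by
        have h1a : (1:ℝ) - a > 0 := by linarith
        rw [div_pow, div_pow] <;> rw [div_mul_div_comm, div_mul_div_comm, div_le_div_iff₀ hden (by positivity)]
        nlinarith [mul_le_mul_of_nonneg_right key (show (0:ℝ) ≤ 9 + 4*t^2 by positivity), sq_nonneg t]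
end

section
/- For every real t ≥ 0 and x ≥ 10^{10}, the integral ∫_{4 log x}^{∞} (4π log x)^{−1/2} exp(−t²/(4 log x)) · ((t + log x)·t/(2 log x)) · x e^{t} dt ≤ (5/√π)·x·(log x)^{1/2}. -/
open MeasureTheory Set Real Nat

lemma gammaShift (a : ℝ) (n : ℕ) :
    IntegrableOn (fun t : ℝ => (t - a) ^ n * Real.exp (-(t - a))) (Set.Ioi a) ∧
    (∫ t in Set.Ioi a, (t - a) ^ n * Real.exp (-(t - a))) = (n ! : ℝ) := by
  have hfun : ∀ x : ℝ, 0 < x → Real.exp (-x) * x ^ (((n : ℝ) + 1) - 1) = x ^ n * Real.exp (-x) := by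
    intro x hx
    rw [add_sub_cancel_right, Real.rpow_natCast, mul_comm]
  have h0 : IntegrableOn (fun s : ℝ => s ^ n * Real.exp (-s)) (Set.Ioi 0) := by
    refine (Real.GammaIntegral_convergent (s := (n : ℝ) + 1) (by positivity)).congr_fun ?_
      measurableSet_Ioi
    intro x hx; exact hfun x hx
  have hI0 : (∫ s in Set.Ioi (0:ℝ), s ^ n * Real.exp (-s)) = (n ! : ℝ) := by
    have h := Real.Gamma_eq_integral (s := (n : ℝ) + 1) (by positivity)
    rw [Real.Gamma_nat_eq_factorial] at h
    rw [h]
    exact (setIntegral_congr_fun measurableSet_Ioi fun x hx => hfun x hx).symm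
  set f : ℝ → ℝ := (Set.Ioi (0:ℝ)).indicator (fun s => s ^ n * Real.exp (-s)) with hf
  have hkey : ∀ t : ℝ, (Set.Ioi a).indicator (fun t => (t - a) ^ n * Real.exp (-(t - a))) t
      = f (t + -a) := by
    intro t
    simp only [hf, Set.indicator_apply, Set.mem_Ioi, ← sub_eq_add_neg, sub_pos]
  have hfInt : Integrable f := (integrable_indicator_iff measurableSet_Ioi).2 h0
  constructor
  · rw [← integrable_indicator_iff measurableSet_Ioi]
    have := hfInt.comp_add_right (-a)
    exact this.congr (Filter.Eventually.of_forall fun t => (hkey t).symm)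
  · rw [← integral_indicator measurableSet_Ioi]
    simp_rw [hkey]
    rw [integral_add_right_eq_self f (-a), hf, integral_indicator measurableSet_Ioi, hI0]


set_option maxHeartbeats 1000000 in
theorem stmt18 (x : ℝ) (hx : 10 ^ 10 ≤ x) :
    (∫ t in Set.Ioi (4 * Real.log x),
      (4 * Real.pi * Real.log x) ^ (-(1/2) : ℝ) * Real.exp (-t ^ 2 / (4 * Real.log x))
        * ((t + Real.log x) * t / (2 * Real.log x)) * (x * Real.exp t))
    ≤ (5 / Real.sqrt Real.pi) * x * Real.sqrt (Real.log x) := by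
  have hx0 : (0:ℝ) < x := lt_of_lt_of_le (by norm_num) hx
  set L := Real.log x with hLdef
  have hL17 : (17:ℝ) ≤ L := by
    rw [hLdef, Real.le_log_iff_exp_le hx0]
    have h1 : Real.exp 17 = Real.exp 1 ^ 17 := by
      rw [← Real.exp_nat_mul]; norm_num
    have h2 : Real.exp 1 ^ 17 ≤ 2.7182818286 ^ 17 :=
      pow_le_pow_left₀ (Real.exp_pos 1).le Real.exp_one_lt_d9.le 17
    calc Real.exp 17 ≤ 2.7182818286 ^ 17 := h1 ▸ h2
      _ ≤ 10 ^ 10 := by norm_num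
      _ ≤ x := hx
  clear_value L
  have hL0 : (0:ℝ) < L := by linarith
  set a := 4 * L with ha
  set K := (4 * Real.pi * L) ^ (-(1/2) : ℝ) with hK
  clear_value K
  have hK0 : 0 ≤ K := hK ▸ Real.rpow_nonneg (by positivity) _
  set C := K * x / (2 * L) with hC
  clear_value C
  have hC0 : 0 ≤ C := by rw [hC]; positivity
  -- majorant
  set G : ℝ → ℝ := fun t =>
      C * (5/8) * ((t - a) ^ 4 * Real.exp (-(t - a)))
    + C * (1 - 5*L) * ((t - a) ^ 2 * Real.exp (-(t - a)))
    + C * (9*L) * ((t - a) ^ 1 * Real.exp (-(t - a)))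
    + C * (20*L^2) * ((t - a) ^ 0 * Real.exp (-(t - a))) with hG
  clear_value G
  have hi4 := (gammaShift a 4).1.const_mul (C * (5/8))
  have hi2 := (gammaShift a 2).1.const_mul (C * (1 - 5*L))
  have hi1 := (gammaShift a 1).1.const_mul (C * (9*L))
  have hi0 := (gammaShift a 0).1.const_mul (C * (20*L^2))
  have hGint : MeasureTheory.IntegrableOn G (Set.Ioi a) := by
    rw [hG]; exact ((hi4.add hi2).add hi1).add hi0
  have hi42 : MeasureTheory.Integrable (fun t =>
      C * (5/8) * ((t - a) ^ 4 * Real.exp (-(t - a)))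
    + C * (1 - 5*L) * ((t - a) ^ 2 * Real.exp (-(t - a))))
      (MeasureTheory.volume.restrict (Set.Ioi a)) := hi4.add hi2
  have hi421 : MeasureTheory.Integrable (fun t =>
      C * (5/8) * ((t - a) ^ 4 * Real.exp (-(t - a)))
    + C * (1 - 5*L) * ((t - a) ^ 2 * Real.exp (-(t - a)))
    + C * (9*L) * ((t - a) ^ 1 * Real.exp (-(t - a))))
      (MeasureTheory.volume.restrict (Set.Ioi a)) := hi42.add hi1
  have hGval : (∫ t in Set.Ioi a, G t) = C * (20*L^2 - L + 17) := by
    simp only [hG]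
    rw [MeasureTheory.integral_add hi421 hi0,
      MeasureTheory.integral_add hi42 hi1,
      MeasureTheory.integral_add hi4 hi2,
      MeasureTheory.integral_const_mul, MeasureTheory.integral_const_mul,
      MeasureTheory.integral_const_mul, MeasureTheory.integral_const_mul,
      (gammaShift a 4).2, (gammaShift a 2).2, (gammaShift a 1).2, (gammaShift a 0).2]
    norm_num [Nat.factorial]
    ring
  -- pointwise bound
  have hpt : ∀ t ∈ Set.Ioi a,
      K * Real.exp (-t ^ 2 / (4 * L)) * ((t + L) * t / (2 * L)) * (x * Real.exp t) ≤ G t := by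
    intro t ht
    rw [Set.mem_Ioi] at ht
    obtain ⟨s, hs⟩ : ∃ s : ℝ, s = t - a := ⟨_, rfl⟩
    have hs0 : 0 < s := by rw [hs, ha]; rw [ha] at ht; linarith
    obtain ⟨u, hu⟩ : ∃ u : ℝ, u = s^2 / (4*L) := ⟨_, rfl⟩
    have hu0 : 0 ≤ u := by rw [hu]; positivity
    have h1 : Real.exp (-t ^ 2 / (4 * L)) * Real.exp t = Real.exp (-s) * Real.exp (-u) := by
      rw [← Real.exp_add, ← Real.exp_add]
      congr 1
      rw [hu, hs, ha]
      field_simp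
      ring
    have hquad : Real.exp (-u) ≤ 1 - u + u^2/2 := by
      have h := Real.quadratic_le_exp_of_nonneg hu0
      have hpos : 0 < 1 - u + u^2/2 := by nlinarith [sq_nonneg (u - 1)]
      have hmul : Real.exp u * Real.exp (-u) = 1 := by
        rw [← Real.exp_add]; simp
      nlinarith [mul_le_mul_of_nonneg_left h hpos.le, Real.exp_pos (-u),
        mul_le_mul_of_nonneg_right
          (mul_le_mul_of_nonneg_left h hpos.le) (Real.exp_pos (-u)).le,
        sq_nonneg (u^2)]
    have hP : (s^2 + 9*L*s + 20*L^2) * Real.exp (-u)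
        ≤ (5/8)*s^4 + (1 - 5*L)*s^2 + 9*L*s + 20*L^2 := by
      have e0 : (s^2 + 9*L*s + 20*L^2) * Real.exp (-u)
          = (s^2 + 9*L*s) * Real.exp (-u) + 20*L^2 * Real.exp (-u) := by ring
      have e1 : (s^2 + 9*L*s) * Real.exp (-u) ≤ s^2 + 9*L*s :=
        mul_le_of_le_one_right (by positivity) (Real.exp_le_one_iff.2 (by linarith))
      have e2 : 20*L^2 * Real.exp (-u) ≤ 20*L^2 * (1 - u + u^2/2) :=
        mul_le_mul_of_nonneg_left hquad (by positivity)
      have e3 : 20*L^2 * (1 - u + u^2/2) = 20*L^2 - 5*L*s^2 + (5/8)*s^4 := by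
        rw [hu]; field_simp; ring
      linarith [e0.le, e0.ge, e1, e2]
    have hF : K * Real.exp (-t ^ 2 / (4 * L)) * ((t + L) * t / (2 * L)) * (x * Real.exp t)
        = C * ((s^2 + 9*L*s + 20*L^2) * Real.exp (-u)) * Real.exp (-s) := by
      have h2 : (t + L) * t = s^2 + 9*L*s + 20*L^2 := by rw [hs, ha]; ring
      calc K * Real.exp (-t ^ 2 / (4 * L)) * ((t + L) * t / (2 * L)) * (x * Real.exp t)
          = (K * x / (2*L)) * ((t + L) * t) * (Real.exp (-t ^ 2 / (4 * L)) * Real.exp t) := by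
            field_simp
        _ = C * ((s^2 + 9*L*s + 20*L^2) * Real.exp (-u)) * Real.exp (-s) := by
            rw [h1, h2, hC]; ring
    rw [hF]
    calc C * ((s^2 + 9*L*s + 20*L^2) * Real.exp (-u)) * Real.exp (-s)
        ≤ C * ((5/8)*s^4 + (1 - 5*L)*s^2 + 9*L*s + 20*L^2) * Real.exp (-s) := by
          apply mul_le_mul_of_nonneg_right _ (Real.exp_pos (-s)).le
          exact mul_le_mul_of_nonneg_left hP hC0
      _ = G t := by simp only [hG]; rw [← hs]; ring
  -- combine
  have hmono : (∫ t in Set.Ioi a,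
      K * Real.exp (-t ^ 2 / (4 * L)) * ((t + L) * t / (2 * L)) * (x * Real.exp t))
      ≤ ∫ t in Set.Ioi a, G t := by
    apply MeasureTheory.integral_mono_of_nonneg _ hGint
    · exact (MeasureTheory.ae_restrict_iff' measurableSet_Ioi).2
        (Filter.Eventually.of_forall hpt)
    · apply (MeasureTheory.ae_restrict_iff' measurableSet_Ioi).2
      apply Filter.Eventually.of_forall
      intro t ht
      rw [Set.mem_Ioi, ha] at ht
      have h1 : 0 ≤ (t + L) * t / (2 * L) := by
        apply div_nonneg _ (by linarith)
        apply mul_nonneg <;> nlinarith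
      have h2 : 0 ≤ Real.exp (-t ^ 2 / (4 * L)) := (Real.exp_pos _).le
      have h3 : 0 ≤ x * Real.exp t := by positivity
      exact mul_nonneg (mul_nonneg (mul_nonneg hK0 h2) h1) h3
  have hsl : Real.sqrt L * Real.sqrt L = L := Real.mul_self_sqrt hL0.le
  have hsp : 0 < Real.sqrt Real.pi := Real.sqrt_pos.2 Real.pi_pos
  have hsL : 0 < Real.sqrt L := Real.sqrt_pos.2 hL0
  have hKval : K = (2 * Real.sqrt Real.pi * Real.sqrt L)⁻¹ := by
    rw [hK, Real.rpow_neg (by positivity), ← Real.sqrt_eq_rpow]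
    congr 1
    rw [show 4 * Real.pi * L = (2 * Real.sqrt Real.pi * Real.sqrt L)^2 by
      nlinarith [Real.sq_sqrt Real.pi_pos.le, hsl], Real.sqrt_sq (by positivity)]
  have hfinal : C * (20*L^2 - L + 17) ≤ (5 / Real.sqrt Real.pi) * x * Real.sqrt L := by
    have step1 : C * (20*L^2 - L + 17) ≤ C * (20*L^2) := by
      apply mul_le_mul_of_nonneg_left _ hC0
      nlinarith
    have step2 : C * (20*L^2) = (5 / Real.sqrt Real.pi) * x * Real.sqrt L := by
      rw [hC, hKval]
      field_simp
      linear_combination (-20) * hsl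
    linarith [step1, step2.le, step2.ge]
  calc (∫ t in Set.Ioi a,
      K * Real.exp (-t ^ 2 / (4 * L)) * ((t + L) * t / (2 * L)) * (x * Real.exp t))
      ≤ ∫ t in Set.Ioi a, G t := hmono
    _ = C * (20*L^2 - L + 17) := hGval
    _ ≤ _ := hfinal
end
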